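/- arXiv:1701.06752 — 3 statements merged into one kernel-verified Lean document; each statement's English description precedes it below -/
import Mathlib

section
/- Let Z_W(m) = 2^m · m^{-m(m+1)/2} · ∏_{j=1}^m j!. Then for a fixed positive integer k, lim_{m→∞} (1/m) · log[ ((m-k)/m)^{m(m+1)/2} · Z_W(m-k)/Z_W(m) ] = k. -/
open Real Filter Finset

/-- The normalizing constant `Z_W(m) = 2^m · m^{-m(m+1)/2} · ∏_{j=1}^m j!` of the
Wishart eigenvalue density. -/
noncomputable def wishartZ (m : ℕ) : ℝ :=
  2 ^ m * (m : ℝ) ^ (-((m * (m + 1) : ℝ) / 2)) * ∏ j ∈ Finset.Icc 1 m, (Nat.factorial j : ℝ)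

lemma aux_inv_nat : Tendsto (fun m : ℕ => ((m:ℝ))⁻¹) atTop (nhds 0) :=
  tendsto_inv_atTop_zero.comp tendsto_natCast_atTop_atTop

lemma aux_sub_atTop (c : ℝ) : Tendsto (fun m : ℕ => (m:ℝ) - c) atTop atTop := by
  have := tendsto_atTop_add_const_right atTop (-c) tendsto_natCast_atTop_atTop
  simpa [sub_eq_add_neg] using this

lemma aux_ratio (c : ℝ) : Tendsto (fun m : ℕ => ((m:ℝ) - c) / m) atTop (nhds 1) := by
  have h : Tendsto (fun m : ℕ => 1 - c * ((m:ℝ))⁻¹) atTop (nhds 1) := by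
    have := (tendsto_const_nhds (x := c)).mul aux_inv_nat
    simpa using (tendsto_const_nhds (x := (1:ℝ))).sub this
  refine h.congr' ?_
  filter_upwards [eventually_gt_atTop 0] with m hm
  have hm' : (m:ℝ) ≠ 0 := Nat.cast_ne_zero.mpr hm.ne'
  field_simp

lemma aux_log_div (c : ℝ) :
    Tendsto (fun m : ℕ => Real.log ((m:ℝ) - c) / m) atTop (nhds 0) := by
  have h2 : Tendsto (fun x : ℝ => Real.log x / x) atTop (nhds 0) :=
    Real.isLittleO_log_id_atTop.tendsto_div_nhds_zero
  have h3 : Tendsto (fun m : ℕ => Real.log ((m:ℝ) - c) / ((m:ℝ) - c)) atTop (nhds 0) :=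
    h2.comp (aux_sub_atTop c)
  have h5 := h3.mul (aux_ratio c)
  rw [zero_mul] at h5
  refine h5.congr' ?_
  filter_upwards [(aux_sub_atTop c).eventually_gt_atTop 0, eventually_gt_atTop 0] with m h1 h0
  have hm' : (m:ℝ) ≠ 0 := Nat.cast_ne_zero.mpr h0.ne'
  field_simp

lemma aux_log_sub_log (a b : ℝ) :
    Tendsto (fun m : ℕ => Real.log ((m:ℝ) - a) - Real.log ((m:ℝ) - b)) atTop (nhds 0) := by
  have hq : Tendsto (fun m : ℕ => ((m:ℝ) - a) / ((m:ℝ) - b)) atTop (nhds 1) := by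
    have h0 : Tendsto (fun m : ℕ => 1 + (b - a) * ((m:ℝ) - b)⁻¹) atTop (nhds 1) := by
      have := (tendsto_const_nhds (x := b - a)).mul
        (tendsto_inv_atTop_zero.comp (aux_sub_atTop b))
      simpa using (tendsto_const_nhds (x := (1:ℝ))).add this
    refine h0.congr' ?_
    filter_upwards [(aux_sub_atTop b).eventually_gt_atTop 0] with m hm
    field_simp
    ring
  have hlog : Tendsto (fun m : ℕ => Real.log (((m:ℝ) - a) / ((m:ℝ) - b))) atTop (nhds 0) := by
    have hc : ContinuousAt Real.log 1 := Real.continuousAt_log one_ne_zero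
    have := hc.tendsto.comp hq
    simpa [Function.comp_def] using this
  refine hlog.congr' ?_
  filter_upwards [(aux_sub_atTop a).eventually_gt_atTop 0,
    (aux_sub_atTop b).eventually_gt_atTop 0] with m h1 h2
  rw [Real.log_div h1.ne' h2.ne']

lemma aux_log_factorial (n : ℕ) (hn : 1 ≤ n) :
    Real.log (Nat.factorial n : ℝ) = Real.log (Stirling.stirlingSeq n) + 1 / 2 * Real.log (2 * n)
      + n * Real.log n - n := by
  have h := Stirling.log_stirlingSeq_formula n
  have hn' : (0:ℝ) < n := by exact_mod_cast hn
  have he : Real.log ((n:ℝ) / Real.exp 1) = Real.log n - 1 := by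
    rw [Real.log_div hn'.ne' (Real.exp_ne_zero 1), Real.log_exp]
  rw [he] at h
  have hh : Real.log (Stirling.stirlingSeq n)
      = Real.log (Nat.factorial n : ℝ) - 1 / 2 * Real.log (2 * n) - n * (Real.log n - 1) := h
  nlinarith [hh]

lemma aux_stirling_log (i : ℕ) :
    Tendsto (fun m : ℕ => Real.log (Stirling.stirlingSeq (m - i)) * ((m:ℝ))⁻¹)
      atTop (nhds 0) := by
  have hpos : (0:ℝ) < Real.sqrt Real.pi := Real.sqrt_pos.mpr Real.pi_pos
  have hs : Tendsto (fun m : ℕ => Stirling.stirlingSeq (m - i)) atTop (nhds (Real.sqrt Real.pi)) :=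
    Stirling.tendsto_stirlingSeq_sqrt_pi.comp (tendsto_sub_atTop_nat i)
  have hl : Tendsto (fun m : ℕ => Real.log (Stirling.stirlingSeq (m - i))) atTop
      (nhds (Real.log (Real.sqrt Real.pi))) :=
    ((Real.continuousAt_log hpos.ne').tendsto.comp hs)
  have hinv : Tendsto (fun m : ℕ => ((m:ℝ))⁻¹) atTop (nhds 0) :=
    tendsto_inv_atTop_zero.comp tendsto_natCast_atTop_atTop
  simpa using hl.mul hinv

lemma aux_T (k i : ℕ) :
    Tendsto (fun m : ℕ =>
        Real.log ((m:ℝ) - k) - Real.log (Nat.factorial (m - i) : ℝ) / m)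
      atTop (nhds 1) := by
  have aux_inv_nat : Tendsto (fun m : ℕ => ((m:ℝ))⁻¹) atTop (nhds 0) :=
    tendsto_inv_atTop_zero.comp tendsto_natCast_atTop_atTop
  have hfourth : Tendsto (fun m : ℕ => Real.log (2 * ((m:ℝ) - i)) / m / 2) atTop (nhds 0) := by
    have h := (((tendsto_const_nhds (x := Real.log 2)).mul aux_inv_nat).add
      (aux_log_div i)).div_const 2
    norm_num at h
    refine h.congr' ?_
    filter_upwards [(aux_sub_atTop i).eventually_gt_atTop 0, eventually_gt_atTop 0] with m h1 h0
    have hm0 : ((m:ℝ)) ≠ 0 := Nat.cast_ne_zero.mpr h0.ne'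
    rw [Real.log_mul two_ne_zero h1.ne']
    field_simp
  have hmain : Tendsto (fun m : ℕ =>
      (Real.log ((m:ℝ) - k) - Real.log ((m:ℝ) - i))
      + (i:ℝ) * (Real.log ((m:ℝ) - i) / m)
      - Real.log (Stirling.stirlingSeq (m - i)) * ((m:ℝ))⁻¹
      - Real.log (2 * ((m:ℝ) - i)) / m / 2
      + ((m:ℝ) - i) / m) atTop (nhds (0 + (i:ℝ) * 0 - 0 - 0 + 1)) :=
    ((((aux_log_sub_log k i).add ((tendsto_const_nhds (x := (i:ℝ))).mul
      (aux_log_div i))).sub (aux_stirling_log i)).sub hfourth).add (aux_ratio i)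
  norm_num at hmain
  refine hmain.congr' ?_
  filter_upwards [eventually_ge_atTop (i + 1)] with m hm
  have hile : i ≤ m := by omega
  have h1 : 1 ≤ m - i := by omega
  have hcast : ((m - i : ℕ) : ℝ) = (m:ℝ) - i := by
    rw [Nat.cast_sub hile]
  have hm0 : ((m:ℝ)) ≠ 0 := Nat.cast_ne_zero.mpr (by omega)
  rw [aux_log_factorial (m - i) h1, hcast]
  field_simp
  ring

lemma aux_log_prod_sub (m k : ℕ) (h : k ≤ m) :
    Real.log (∏ j ∈ Icc 1 m, (Nat.factorial j : ℝ))
      - Real.log (∏ j ∈ Icc 1 (m - k), (Nat.factorial j : ℝ))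
      = ∑ i ∈ range k, Real.log (Nat.factorial (m - i) : ℝ) := by
  induction k with
  | zero => simp
  | succ k ih =>
    have hk : k ≤ m := by omega
    have hmk : m - k = (m - (k + 1)) + 1 := by omega
    have hstep : (∏ j ∈ Icc 1 (m - k), (Nat.factorial j : ℝ))
        = (∏ j ∈ Icc 1 (m - (k+1)), (Nat.factorial j : ℝ)) * (Nat.factorial (m - k) : ℝ) := by
      rw [hmk]
      exact Finset.prod_Icc_succ_top (by omega) _
    have hPpos : (0:ℝ) < ∏ j ∈ Icc 1 (m - (k+1)), (Nat.factorial j : ℝ) :=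
      Finset.prod_pos fun j _ => by exact_mod_cast (Nat.factorial_pos j)
    have hfpos : (0:ℝ) < (Nat.factorial (m - k) : ℝ) := by
      exact_mod_cast Nat.factorial_pos (m - k)
    rw [Finset.sum_range_succ, ← ih hk, hstep, Real.log_mul hPpos.ne' hfpos.ne']
    ring

lemma aux_Z_pos (n : ℕ) (hn : 1 ≤ n) : 0 < wishartZ n := by
  have hn' : (0:ℝ) < n := by exact_mod_cast hn
  have hP : (0:ℝ) < ∏ j ∈ Icc 1 n, (Nat.factorial j : ℝ) :=
    Finset.prod_pos fun j _ => by exact_mod_cast (Nat.factorial_pos j)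
  exact mul_pos (mul_pos (by positivity) (Real.rpow_pos_of_pos hn' _)) hP

lemma aux_log_Z (n : ℕ) (hn : 1 ≤ n) :
    Real.log (wishartZ n) = n * Real.log 2 - ((n:ℝ) * ((n:ℝ) + 1) / 2) * Real.log n
      + Real.log (∏ j ∈ Icc 1 n, (Nat.factorial j : ℝ)) := by
  have hn' : (0:ℝ) < n := by exact_mod_cast hn
  have hP : (0:ℝ) < ∏ j ∈ Icc 1 n, (Nat.factorial j : ℝ) :=
    Finset.prod_pos fun j _ => by exact_mod_cast (Nat.factorial_pos j)
  have h2 : ((2:ℝ) ^ n) ≠ 0 := by positivity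
  have hr : ((n:ℝ) ^ (-((n * (n + 1) : ℝ) / 2))) ≠ 0 := (Real.rpow_pos_of_pos hn' _).ne'
  rw [wishartZ, Real.log_mul (mul_ne_zero h2 hr) hP.ne', Real.log_mul h2 hr,
    Real.log_pow, Real.log_rpow hn']
  ring

/-- For a fixed positive integer `k`,
`lim_{m→∞} (1/m) log[ ((m-k)/m)^{m(m+1)/2} · Z_W(m-k)/Z_W(m) ] = k`. -/
theorem wishartZ_ratio_growth (k : ℕ) (hk : 0 < k) :
    Filter.Tendsto
      (fun m : ℕ =>
        (1 / (m : ℝ)) * Real.log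
          ((((m : ℝ) - k) / m) ^ ((m * (m + 1) : ℝ) / 2) * wishartZ (m - k) / wishartZ m))
      Filter.atTop (nhds (k : ℝ)) := by
  have aux_inv_nat : Tendsto (fun m : ℕ => ((m:ℝ))⁻¹) atTop (nhds 0) :=
    tendsto_inv_atTop_zero.comp tendsto_natCast_atTop_atTop
  have t1 : Tendsto (fun m : ℕ => (-(k:ℝ) * Real.log 2) * ((m:ℝ))⁻¹) atTop (nhds 0) := by
    simpa using (tendsto_const_nhds (x := -(k:ℝ) * Real.log 2)).mul aux_inv_nat
  have t2 : Tendsto (fun m : ℕ =>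
      ((k:ℝ) * ((k:ℝ) - 1) / 2) * (Real.log ((m:ℝ) - k) / m)) atTop (nhds 0) := by
    simpa using (tendsto_const_nhds (x := (k:ℝ) * ((k:ℝ) - 1) / 2)).mul (aux_log_div k)
  have t3 : Tendsto (fun m : ℕ => ∑ i ∈ range k,
      (Real.log ((m:ℝ) - k) - Real.log (Nat.factorial (m - i) : ℝ) / m)) atTop
      (nhds (∑ _i ∈ range k, (1:ℝ))) :=
    tendsto_finset_sum _ fun i _ => aux_T k i
  have hmain := (t1.sub t2).add t3
  rw [Finset.sum_const, Finset.card_range, nsmul_eq_mul, mul_one] at hmain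
  norm_num at hmain
  refine hmain.congr' ?_
  filter_upwards [eventually_ge_atTop (k + 1)] with m hm
  have hkm : k ≤ m := by omega
  have hM : (0:ℝ) < m := by exact_mod_cast (by omega : 0 < m)
  have hMk : (0:ℝ) < (m:ℝ) - k := by
    have : (k:ℝ) < m := by exact_mod_cast (by omega : k < m)
    linarith
  have hcast : ((m - k : ℕ) : ℝ) = (m:ℝ) - k := by rw [Nat.cast_sub hkm]
  have hZm : 0 < wishartZ m := aux_Z_pos m (by omega)
  have hZmk : 0 < wishartZ (m - k) := aux_Z_pos (m - k) (by omega)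
  have hr : 0 < (((m:ℝ) - k) / m) ^ ((m * (m + 1) : ℝ) / 2) :=
    Real.rpow_pos_of_pos (div_pos hMk hM) _
  have hsum := aux_log_prod_sub m k hkm
  rw [Real.log_div (mul_pos hr hZmk).ne' hZm.ne', Real.log_mul hr.ne' hZmk.ne',
    Real.log_rpow (div_pos hMk hM), Real.log_div hMk.ne' hM.ne',
    aux_log_Z m (by omega), aux_log_Z (m - k) (by omega), hcast]
  have hsum' : Real.log (∏ j ∈ Icc 1 m, (Nat.factorial j : ℝ))
      = Real.log (∏ j ∈ Icc 1 (m - k), (Nat.factorial j : ℝ))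
        + ∑ i ∈ range k, Real.log (Nat.factorial (m - i) : ℝ) := by linarith [hsum]
  rw [hsum', ← Finset.sum_div]
  have hM0 : (m:ℝ) ≠ 0 := hM.ne'
  field_simp
  ring
end

section
/- For x ≥ 4, the function φ(μ_MP, z) = ∫₀⁴ log|z - y| dμ_MP(y) - z/2 satisfies φ(μ_MP, x) = -I_MP(x) - 1, where μ_MP is the Marchenko-Pastur distribution with density √((4-y)y)/(2πy) on [0,4] and I_MP(x) = ∫₄ˣ √((t-4)/(4t)) dt. -/
open Real Set MeasureTheory intervalIntegral

namespace MPaux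


lemma abs_log_le {t : ℝ} (ht : t ∈ Ioc (0:ℝ) 4) : |Real.log t| ≤ 8 * t ^ (-(1:ℝ)/4) := by
  obtain ⟨h0, h4⟩ := ht
  have hrp : (0:ℝ) < t ^ (-(1:ℝ)/4) := Real.rpow_pos_of_pos h0 _
  rcases le_or_gt t 1 with h1 | h1
  · rw [abs_of_nonpos (Real.log_nonpos h0.le h1)]
    have h := Real.log_le_rpow_div (x := t⁻¹) (by positivity) (show (0:ℝ) < 1/4 by norm_num)
    rw [Real.log_inv] at h
    have : (t⁻¹) ^ ((1:ℝ)/4) = t ^ (-(1:ℝ)/4) := by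
      rw [← Real.rpow_neg_one t, ← Real.rpow_mul h0.le]
      norm_num
    nlinarith [h, this]
  · rw [abs_of_nonneg (Real.log_nonneg h1.le)]
    have h2 : Real.log t ≤ t - 1 := Real.log_le_sub_one_of_pos h0
    have h3 : (4:ℝ) ^ (-(1:ℝ)/4) ≤ t ^ (-(1:ℝ)/4) :=
      Real.rpow_le_rpow_of_nonpos h0 h4 (by norm_num)
    have h4' : (1:ℝ)/2 ≤ (4:ℝ) ^ (-(1:ℝ)/4) := by
      have : (4:ℝ) ^ (-(1:ℝ)/4) = ((4:ℝ) ^ ((1:ℝ)/4))⁻¹ := by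
        rw [← Real.rpow_neg (by norm_num)]; norm_num
      rw [this]
      have h44 : (4:ℝ) ^ ((1:ℝ)/4) ≤ 2 := by
        have hne : ((4:ℝ) ^ ((1:ℝ)/4)) ^ (4:ℕ) = 4 := by
          rw [← Real.rpow_natCast ((4:ℝ) ^ ((1:ℝ)/4)) 4, ← Real.rpow_mul (by norm_num)]
          norm_num
        by_contra hc
        push_neg at hc
        have h16 := pow_lt_pow_left₀ hc (by norm_num : (0:ℝ) ≤ 2) (by norm_num : 4 ≠ 0)
        rw [hne] at h16
        norm_num at h16
      have hpos : (0:ℝ) < (4:ℝ) ^ ((1:ℝ)/4) := Real.rpow_pos_of_pos (by norm_num) _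
      rw [le_inv_comm₀ (by norm_num) hpos]
      linarith
    nlinarith


lemma rpow_quarter_lower {u : ℝ} (h0 : 0 < u) (h4 : u ≤ 4) : (1:ℝ)/2 ≤ u ^ (-(1:ℝ)/4) := by
  have h3 : (4:ℝ) ^ (-(1:ℝ)/4) ≤ u ^ (-(1:ℝ)/4) :=
    Real.rpow_le_rpow_of_nonpos h0 h4 (by norm_num)
  have h4' : (1:ℝ)/2 ≤ (4:ℝ) ^ (-(1:ℝ)/4) := by
    have he : (4:ℝ) ^ (-(1:ℝ)/4) = ((4:ℝ) ^ ((1:ℝ)/4))⁻¹ := by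
      rw [← Real.rpow_neg (by norm_num)]; norm_num
    rw [he]
    have hne : ((4:ℝ) ^ ((1:ℝ)/4)) ^ (4:ℕ) = 4 := by
      rw [← Real.rpow_natCast ((4:ℝ) ^ ((1:ℝ)/4)) 4, ← Real.rpow_mul (by norm_num)]
      norm_num
    have h44 : (4:ℝ) ^ ((1:ℝ)/4) ≤ 2 := by
      by_contra hc
      push_neg at hc
      have h16 := pow_lt_pow_left₀ hc (by norm_num : (0:ℝ) ≤ 2) (by norm_num : 4 ≠ 0)
      rw [hne] at h16
      norm_num at h16
    have hpos : (0:ℝ) < (4:ℝ) ^ ((1:ℝ)/4) := Real.rpow_pos_of_pos (by norm_num) _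
    rw [le_inv_comm₀ (by norm_num) hpos]
    linarith
  linarith

-- dominator integrability
lemma integrableOn_dom :
    IntegrableOn (fun y : ℝ => y ^ (-(1:ℝ)/2) * (4 - y) ^ (-(3:ℝ)/4)) (Ioo (0:ℝ) 4) := by
  have hmeas : Measurable fun y : ℝ => y ^ (-(1:ℝ)/2) * (4 - y) ^ (-(3:ℝ)/4) := by
    exact (measurable_id.pow_const _).mul ((measurable_const.sub measurable_id).pow_const _)
  have h1 : IntegrableOn (fun y : ℝ => y ^ (-(1:ℝ)/2) * (4 - y) ^ (-(3:ℝ)/4)) (Ioc (0:ℝ) 2) := by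
    have hbase : IntegrableOn (fun y : ℝ => y ^ (-(1:ℝ)/2)) (Ioc (0:ℝ) 2) := by
      have := intervalIntegrable_rpow' (a := (0:ℝ)) (b := 2) (r := -(1:ℝ)/2) (by norm_num)
      rwa [intervalIntegrable_iff_integrableOn_Ioc_of_le (by norm_num)] at this
    refine hbase.mono' hmeas.aestronglyMeasurable ?_
    refine (ae_restrict_iff' measurableSet_Ioc).2 (Filter.Eventually.of_forall ?_)
    intro y hy
    have hy0 : 0 < y := hy.1
    have h4y : (2:ℝ) ≤ 4 - y := by linarith [hy.2]
    have hb1 : (4 - y) ^ (-(3:ℝ)/4) ≤ 1 := by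
      calc (4 - y) ^ (-(3:ℝ)/4) ≤ (1:ℝ) ^ (-(3:ℝ)/4) :=
            Real.rpow_le_rpow_of_nonpos (by norm_num) (by linarith) (by norm_num)
        _ = 1 := Real.one_rpow _
    have hp1 : (0:ℝ) < y ^ (-(1:ℝ)/2) := Real.rpow_pos_of_pos hy0 _
    have hp2 : (0:ℝ) ≤ (4 - y) ^ (-(3:ℝ)/4) := Real.rpow_nonneg (by linarith) _
    rw [norm_mul, Real.norm_rpow_of_nonneg hy0.le, Real.norm_of_nonneg hp2,
      Real.norm_of_nonneg hy0.le]
    nlinarith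
  have h2 : IntegrableOn (fun y : ℝ => y ^ (-(1:ℝ)/2) * (4 - y) ^ (-(3:ℝ)/4)) (Ioc (2:ℝ) 4) := by
    have hbase : IntegrableOn (fun y : ℝ => (4 - y) ^ (-(3:ℝ)/4)) (Ioc (2:ℝ) 4) := by
      have h0 := intervalIntegrable_rpow' (a := (0:ℝ)) (b := 2) (r := -(3:ℝ)/4) (by norm_num)
      have h1 := h0.comp_sub_left 4
      rw [show (4:ℝ) - 0 = 4 by norm_num, show (4:ℝ) - 2 = 2 by norm_num] at h1
      have h2 := h1.symm
      rwa [intervalIntegrable_iff_integrableOn_Ioc_of_le (by norm_num)] at h2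
    refine hbase.mono' hmeas.aestronglyMeasurable ?_
    refine (ae_restrict_iff' measurableSet_Ioc).2 (Filter.Eventually.of_forall ?_)
    intro y hy
    have hy0 : (0:ℝ) < y := lt_trans (by norm_num) hy.1
    have h4y : (0:ℝ) ≤ 4 - y := by linarith [hy.2]
    have hb1 : y ^ (-(1:ℝ)/2) ≤ 1 := by
      calc y ^ (-(1:ℝ)/2) ≤ (1:ℝ) ^ (-(1:ℝ)/2) :=
            Real.rpow_le_rpow_of_nonpos (by norm_num) (by linarith [hy.1]) (by norm_num)
        _ = 1 := Real.one_rpow _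
    have hp1 : (0:ℝ) ≤ y ^ (-(1:ℝ)/2) := Real.rpow_nonneg hy0.le _
    have hp2 : (0:ℝ) ≤ (4 - y) ^ (-(3:ℝ)/4) := Real.rpow_nonneg h4y _
    rw [norm_mul, Real.norm_of_nonneg hp1, Real.norm_of_nonneg hp2]
    nlinarith
  have := h1.union h2
  rw [Set.Ioc_union_Ioc_eq_Ioc (by norm_num : (0:ℝ) ≤ 2) (by norm_num : (2:ℝ) ≤ 4)] at this
  exact this.mono_set Ioo_subset_Ioc_self

/-- Workhorse: interval integrability on [0,4] from a pointwise bound by the dominator. -/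
lemma intervalIntegrable_of_bound (F : ℝ → ℝ) (C : ℝ)
    (hm : AEStronglyMeasurable F (volume.restrict (Ioo (0:ℝ) 4)))
    (hb : ∀ y ∈ Ioo (0:ℝ) 4, |F y| ≤ C * (y ^ (-(1:ℝ)/2) * (4 - y) ^ (-(3:ℝ)/4))) :
    IntervalIntegrable F volume 0 4 := by
  rw [intervalIntegrable_iff_integrableOn_Ioc_of_le (by norm_num)]
  have : IntegrableOn F (Ioo (0:ℝ) 4) := by
    refine (integrableOn_dom.const_mul C).mono' hm ?_
    refine (ae_restrict_iff' measurableSet_Ioo).2 (Filter.Eventually.of_forall ?_)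
    intro y hy
    simpa [Real.norm_eq_abs] using hb y hy
  exact this.congr_set_ae Ioo_ae_eq_Ioc.symm


lemma rpow_neg_half_eq {y : ℝ} (hy : 0 ≤ y) : y ^ (-(1:ℝ)/2) = (Real.sqrt y)⁻¹ := by
  rw [show (-(1:ℝ)/2) = -(1/2) by ring, Real.rpow_neg hy, ← Real.sqrt_eq_rpow]

lemma rpow_neg_34_eq {u : ℝ} (hu : 0 < u) :
    u ^ (-(3:ℝ)/4) = u ^ (-(1:ℝ)/4) * (Real.sqrt u)⁻¹ := by
  rw [show (-(3:ℝ)/4) = (-(1:ℝ)/4) + (-(1:ℝ)/2) by ring, Real.rpow_add hu,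
    rpow_neg_half_eq hu.le]

lemma le_dom {F C q s c : ℝ} (hs : 0 < s) (hc : 0 < c) (h : F * (s * c) ≤ C * q) :
    F ≤ C * (s⁻¹ * (q * c⁻¹)) := by
  have he : C * (s⁻¹ * (q * c⁻¹)) = (C * q) / (s * c) := by field_simp
  rw [he, le_div_iff₀ (by positivity)]
  linarith

/-- Common setup: reduces a dominator bound to the multiplied-out inequality. -/
lemma bound_step {F : ℝ → ℝ} {C : ℝ} {y : ℝ} (h1 : 0 < y) (h2 : y < 4)
    (h : |F y| * (Real.sqrt y * Real.sqrt (4 - y)) ≤ C * (4 - y) ^ (-(1:ℝ)/4)) :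
    |F y| ≤ C * (y ^ (-(1:ℝ)/2) * (4 - y) ^ (-(3:ℝ)/4)) := by
  have h4y : (0:ℝ) < 4 - y := by linarith
  rw [rpow_neg_half_eq h1.le, rpow_neg_34_eq h4y]
  exact le_dom (Real.sqrt_pos.2 h1) (Real.sqrt_pos.2 h4y) h

lemma meas_f : Measurable (fun y : ℝ => Real.sqrt ((4 - y) * y) / (2 * Real.pi * y)) :=
  (Real.continuous_sqrt.measurable.comp
    ((measurable_const.sub measurable_id).mul measurable_id)).div
    (measurable_const.mul measurable_id)

lemma meas_log4 : Measurable (fun y : ℝ => Real.log (4 - y)) :=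
  Real.measurable_log.comp (measurable_const.sub measurable_id)

section facts
variable {y : ℝ} (h1 : 0 < y) (h2 : y < 4)

lemma fact_pack (h1 : 0 < y) (h2 : y < 4) :
    Real.sqrt ((4 - y) * y) = Real.sqrt (4 - y) * Real.sqrt y ∧
    Real.sqrt (y * (4 - y)) = Real.sqrt y * Real.sqrt (4 - y) ∧
    Real.sqrt y * Real.sqrt y = y ∧ Real.sqrt (4 - y) * Real.sqrt (4 - y) = 4 - y ∧
    (0:ℝ) < Real.sqrt y ∧ (0:ℝ) < Real.sqrt (4 - y) ∧
    |Real.log (4 - y)| ≤ 8 * (4 - y) ^ (-(1:ℝ)/4) ∧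
    (1:ℝ)/2 ≤ (4 - y) ^ (-(1:ℝ)/4) := by
  have h4y : (0:ℝ) < 4 - y := by linarith
  refine ⟨Real.sqrt_mul h4y.le y, Real.sqrt_mul h1.le _, Real.mul_self_sqrt h1.le,
    Real.mul_self_sqrt h4y.le, Real.sqrt_pos.2 h1, Real.sqrt_pos.2 h4y,
    abs_log_le ⟨h4y, by linarith⟩, rpow_quarter_lower h4y (by linarith)⟩

end facts

lemma N1 : IntervalIntegrable (fun y => Real.sqrt ((4 - y) * y) / (2 * Real.pi * y))
    volume 0 4 := by
  refine intervalIntegrable_of_bound _ 8 meas_f.aestronglyMeasurable ?_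
  rintro y ⟨h1, h2⟩
  obtain ⟨e1, e2, hss, hcc, hs, hc, hL, hq⟩ := fact_pack h1 h2
  apply bound_step h1 h2
  have hpi : (2:ℝ) < Real.pi := by linarith [Real.pi_gt_three]
  rw [abs_of_nonneg (by positivity), e1]
  have hkey : Real.sqrt (4-y) * Real.sqrt y / (2 * Real.pi * y) * (Real.sqrt y * Real.sqrt (4-y))
      = (4 - y) / (2 * Real.pi) := by
    field_simp
    linear_combination (Real.sqrt y*Real.sqrt y)*hcc + (4-y)*hss
  rw [hkey]
  have : (4 - y) / (2 * Real.pi) ≤ 1 := by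
    rw [div_le_one (by positivity)]; nlinarith
  nlinarith

lemma N2 : IntervalIntegrable
    (fun y => Real.log (4 - y) * (Real.sqrt ((4 - y) * y) / (2 * Real.pi * y))) volume 0 4 := by
  refine intervalIntegrable_of_bound _ 8 (meas_log4.mul meas_f).aestronglyMeasurable ?_
  rintro y ⟨h1, h2⟩
  obtain ⟨e1, e2, hss, hcc, hs, hc, hL, hq⟩ := fact_pack h1 h2
  apply bound_step h1 h2
  have hpi : (2:ℝ) < Real.pi := by linarith [Real.pi_gt_three]
  rw [abs_mul, abs_of_nonneg (show (0:ℝ) ≤ Real.sqrt ((4-y)*y) / (2*Real.pi*y) by positivity), e1]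
  have hkey : |Real.log (4-y)| * (Real.sqrt (4-y) * Real.sqrt y / (2 * Real.pi * y))
      * (Real.sqrt y * Real.sqrt (4-y)) = |Real.log (4-y)| * ((4 - y) / (2 * Real.pi)) := by
    field_simp
    linear_combination (|Real.log (4-y)| * (Real.sqrt y * Real.sqrt y)) * hcc
      + (|Real.log (4-y)| * (4-y)) * hss
  rw [hkey]
  have h47 : (4 - y) / (2 * Real.pi) ≤ 1 := by
    rw [div_le_one (by positivity)]; nlinarith
  calc |Real.log (4-y)| * ((4 - y) / (2 * Real.pi))
      ≤ |Real.log (4-y)| * 1 := mul_le_mul_of_nonneg_left h47 (abs_nonneg _)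
    _ = |Real.log (4-y)| := mul_one _
    _ ≤ 8 * (4 - y) ^ (-(1:ℝ)/4) := hL

lemma N3 : IntervalIntegrable
    (fun y => (2 - y) * Real.log (4 - y) / Real.sqrt (y * (4 - y))) volume 0 4 := by
  have hm : Measurable (fun y : ℝ => (2 - y) * Real.log (4 - y) / Real.sqrt (y * (4 - y))) :=
    ((measurable_const.sub measurable_id).mul meas_log4).div
      (Real.continuous_sqrt.measurable.comp (measurable_id.mul (measurable_const.sub measurable_id)))
  refine intervalIntegrable_of_bound _ 16 hm.aestronglyMeasurable ?_
  rintro y ⟨h1, h2⟩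
  obtain ⟨e1, e2, hss, hcc, hs, hc, hL, hq⟩ := fact_pack h1 h2
  apply bound_step h1 h2
  rw [abs_div, abs_mul, abs_of_nonneg (Real.sqrt_nonneg _), e2]
  have hkey : |2 - y| * |Real.log (4-y)| / (Real.sqrt y * Real.sqrt (4-y))
      * (Real.sqrt y * Real.sqrt (4-y)) = |2 - y| * |Real.log (4-y)| := by
    field_simp
  rw [hkey]
  have h2y : |2 - y| ≤ 2 := by rw [abs_le]; constructor <;> linarith
  nlinarith [abs_nonneg (Real.log (4-y)), abs_nonneg (2-y), hq]

lemma N4 : IntervalIntegrable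
    (fun y => Real.log (4 - y) / Real.sqrt (y * (4 - y))) volume 0 4 := by
  have hm : Measurable (fun y : ℝ => Real.log (4 - y) / Real.sqrt (y * (4 - y))) :=
    meas_log4.div
      (Real.continuous_sqrt.measurable.comp (measurable_id.mul (measurable_const.sub measurable_id)))
  refine intervalIntegrable_of_bound _ 8 hm.aestronglyMeasurable ?_
  rintro y ⟨h1, h2⟩
  obtain ⟨e1, e2, hss, hcc, hs, hc, hL, hq⟩ := fact_pack h1 h2
  apply bound_step h1 h2
  rw [abs_div, abs_of_nonneg (Real.sqrt_nonneg _), e2]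
  have hkey : |Real.log (4-y)| / (Real.sqrt y * Real.sqrt (4-y))
      * (Real.sqrt y * Real.sqrt (4-y)) = |Real.log (4-y)| := by
    field_simp
  rw [hkey]
  linarith [hL]

lemma N5 {t : ℝ} (ht : 4 < t) : IntervalIntegrable
    (fun y => (t - y)⁻¹ * (Real.sqrt ((4 - y) * y) / (2 * Real.pi * y))) volume 0 4 := by
  have hm : Measurable (fun y : ℝ => (t - y)⁻¹ * (Real.sqrt ((4 - y) * y) / (2 * Real.pi * y))) :=
    (measurable_const.sub measurable_id).inv.mul meas_f
  refine intervalIntegrable_of_bound _ (8 * (t - 4)⁻¹) hm.aestronglyMeasurable ?_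
  rintro y ⟨h1, h2⟩
  obtain ⟨e1, e2, hss, hcc, hs, hc, hL, hq⟩ := fact_pack h1 h2
  apply bound_step h1 h2
  have hpi : (2:ℝ) < Real.pi := by linarith [Real.pi_gt_three]
  have hty : (0:ℝ) < t - y := by linarith
  have ht4 : (0:ℝ) < t - 4 := by linarith
  rw [abs_mul, abs_of_nonneg (show (0:ℝ) ≤ (t-y)⁻¹ by positivity),
    abs_of_nonneg (show (0:ℝ) ≤ Real.sqrt ((4-y)*y) / (2*Real.pi*y) by positivity), e1]
  have hkey : (t - y)⁻¹ * (Real.sqrt (4-y) * Real.sqrt y / (2 * Real.pi * y))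
      * (Real.sqrt y * Real.sqrt (4-y)) = (t - y)⁻¹ * ((4 - y) / (2 * Real.pi)) := by
    field_simp
    linear_combination (Real.sqrt y*Real.sqrt y)*hcc
      + (4-y)*hss
  rw [hkey]
  have hb1 : (t - y)⁻¹ ≤ (t - 4)⁻¹ := by
    apply inv_anti₀ ht4; linarith
  have h47 : (4 - y) / (2 * Real.pi) ≤ 1 := by
    rw [div_le_one (by positivity)]; nlinarith
  have hstep : (t - y)⁻¹ * ((4 - y) / (2 * Real.pi)) ≤ (t - 4)⁻¹ := by
    calc (t - y)⁻¹ * ((4 - y) / (2 * Real.pi)) ≤ (t - y)⁻¹ * 1 :=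
          mul_le_mul_of_nonneg_left h47 (by positivity)
      _ = (t - y)⁻¹ := mul_one _
      _ ≤ (t - 4)⁻¹ := hb1
  have hq8 : (1:ℝ) ≤ 8 * (4 - y) ^ (-(1:ℝ)/4) := by linarith
  calc (t - y)⁻¹ * ((4 - y) / (2 * Real.pi)) ≤ (t - 4)⁻¹ := hstep
    _ = (t - 4)⁻¹ * 1 := (mul_one _).symm
    _ ≤ (t - 4)⁻¹ * (8 * (4 - y) ^ (-(1:ℝ)/4)) :=
        mul_le_mul_of_nonneg_left hq8 (by positivity)
    _ = 8 * (t - 4)⁻¹ * (4 - y) ^ (-(1:ℝ)/4) := by ring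

lemma N6 {x : ℝ} (hx : 4 < x) : IntervalIntegrable
    (fun y => Real.log (x - y) * (Real.sqrt ((4 - y) * y) / (2 * Real.pi * y))) volume 0 4 := by
  have hm : Measurable (fun y : ℝ => Real.log (x - y) * (Real.sqrt ((4 - y) * y) / (2 * Real.pi * y))) :=
    (Real.measurable_log.comp (measurable_const.sub measurable_id)).mul meas_f
  set Cx := |Real.log (x - 4)| + |Real.log x| with hCx
  refine intervalIntegrable_of_bound _ (8 * Cx) hm.aestronglyMeasurable ?_
  rintro y ⟨h1, h2⟩
  obtain ⟨e1, e2, hss, hcc, hs, hc, hL, hq⟩ := fact_pack h1 h2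
  apply bound_step h1 h2
  have hpi : (2:ℝ) < Real.pi := by linarith [Real.pi_gt_three]
  have hlog : |Real.log (x - y)| ≤ Cx := by
    have hl : Real.log (x - 4) ≤ Real.log (x - y) := by
      apply Real.log_le_log (by linarith); linarith
    have hu : Real.log (x - y) ≤ Real.log x := by
      apply Real.log_le_log (by linarith); linarith
    rw [abs_le]
    constructor
    · calc -(|Real.log (x-4)| + |Real.log x|) ≤ -|Real.log (x-4)| := by
            nlinarith [abs_nonneg (Real.log x)]
        _ ≤ Real.log (x - 4) := neg_abs_le _
        _ ≤ Real.log (x - y) := hl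
    · calc Real.log (x - y) ≤ Real.log x := hu
        _ ≤ |Real.log x| := le_abs_self _
        _ ≤ Cx := by nlinarith [abs_nonneg (Real.log (x-4))]
  rw [abs_mul, abs_of_nonneg (show (0:ℝ) ≤ Real.sqrt ((4-y)*y) / (2*Real.pi*y) by positivity), e1]
  have hkey : |Real.log (x - y)| * (Real.sqrt (4-y) * Real.sqrt y / (2 * Real.pi * y))
      * (Real.sqrt y * Real.sqrt (4-y)) = |Real.log (x - y)| * ((4 - y) / (2 * Real.pi)) := by
    field_simp
    linear_combination (|Real.log (x-y)| * (Real.sqrt y * Real.sqrt y)) * hcc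
      + (|Real.log (x-y)| * (4-y)) * hss
  rw [hkey]
  have h47 : (4 - y) / (2 * Real.pi) ≤ 1 := by
    rw [div_le_one (by positivity)]; nlinarith
  have hCx0 : 0 ≤ Cx := by positivity
  have hq8 : (1:ℝ) ≤ 8 * (4 - y) ^ (-(1:ℝ)/4) := by linarith
  calc |Real.log (x - y)| * ((4 - y) / (2 * Real.pi))
      ≤ |Real.log (x - y)| * 1 := mul_le_mul_of_nonneg_left h47 (abs_nonneg _)
    _ = |Real.log (x - y)| := mul_one _
    _ ≤ Cx := hlog
    _ = Cx * 1 := (mul_one _).symm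
    _ ≤ Cx * (8 * (4 - y) ^ (-(1:ℝ)/4)) := mul_le_mul_of_nonneg_left hq8 hCx0
    _ = 8 * Cx * (4 - y) ^ (-(1:ℝ)/4) := by ring


lemma sqrt_quarter {y : ℝ} (h1 : 0 < y) (h2 : y < 4) :
    Real.sqrt (1 - (y/2 - 1)^2) = Real.sqrt (y * (4 - y)) / 2 := by
  rw [show 1 - (y/2 - 1)^2 = (y * (4 - y))/4 by ring,
    show (y * (4 - y))/4 = (y * (4 - y))/(2:ℝ)^2 by norm_num,
    Real.sqrt_div (by nlinarith) , Real.sqrt_sq (by norm_num : (0:ℝ) ≤ 2)]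

lemma arcsin_deriv {y : ℝ} (h1 : 0 < y) (h2 : y < 4) :
    HasDerivAt (fun y : ℝ => Real.arcsin (y/2 - 1)) (1 / Real.sqrt (y * (4 - y))) y := by
  have hY : 0 < y * (4 - y) := by nlinarith
  have hne1 : y/2 - 1 ≠ -1 := by intro h; nlinarith [h]
  have hne2 : y/2 - 1 ≠ 1 := by intro h; nlinarith [h]
  have hinner : HasDerivAt (fun y : ℝ => y/2 - 1) (1/2) y := by
    simpa using ((hasDerivAt_id y).div_const 2).sub_const 1
  have h := (Real.hasDerivAt_arcsin hne1 hne2).comp y hinner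
  refine h.congr_deriv ?_
  rw [sqrt_quarter h1 h2]
  have hs : 0 < Real.sqrt (y * (4 - y)) := Real.sqrt_pos.2 hY
  field_simp

lemma sqrtY_deriv {y : ℝ} (h1 : 0 < y) (h2 : y < 4) :
    HasDerivAt (fun y : ℝ => Real.sqrt (y * (4 - y)))
      ((2 - y) / Real.sqrt (y * (4 - y))) y := by
  have hY : 0 < y * (4 - y) := by nlinarith
  have hu : HasDerivAt (fun y : ℝ => y * (4 - y)) (4 - 2*y) y := by
    have := (hasDerivAt_id' (x := y)).mul ((hasDerivAt_const y (4:ℝ)).sub (hasDerivAt_id' (x := y)))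
    exact this.congr_deriv (by simp only [Pi.sub_apply]; ring)
  have h := (Real.hasDerivAt_sqrt (ne_of_gt hY)).comp y hu
  refine h.congr_deriv ?_
  have hs : 0 < Real.sqrt (y * (4 - y)) := Real.sqrt_pos.2 hY
  field_simp
  ring

lemma mass : ∫ y in (0:ℝ)..4, Real.sqrt ((4 - y) * y) / (2 * Real.pi * y) = 1 := by
  have hπ : (0:ℝ) < Real.pi := Real.pi_pos
  set W : ℝ → ℝ := fun y => (Real.sqrt (y * (4 - y)) + 2 * Real.arcsin (y/2 - 1)) / (2 * Real.pi)
    with hW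
  have hcont : ContinuousOn W (Icc 0 4) := by
    apply Continuous.continuousOn
    exact ((Real.continuous_sqrt.comp (continuous_id.mul (continuous_const.sub continuous_id))).add
      (continuous_const.mul
        (Real.continuous_arcsin.comp ((continuous_id.div_const 2).sub continuous_const)))).div_const
      (2 * Real.pi)
  have hderiv : ∀ y ∈ Ioo (0:ℝ) 4, HasDerivWithinAt W
      (Real.sqrt ((4 - y) * y) / (2 * Real.pi * y)) (Ioi y) y := by
    rintro y ⟨h1, h2⟩
    have hY : 0 < y * (4 - y) := by nlinarith
    have hs : 0 < Real.sqrt (y * (4 - y)) := Real.sqrt_pos.2 hY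
    have hss : Real.sqrt (y * (4-y)) * Real.sqrt (y * (4-y)) = y * (4-y) :=
      Real.mul_self_sqrt hY.le
    have hd : HasDerivAt W (((2 - y) / Real.sqrt (y * (4 - y))
        + 2 * (1 / Real.sqrt (y * (4 - y)))) / (2 * Real.pi)) y :=
      (((sqrtY_deriv h1 h2).add ((arcsin_deriv h1 h2).const_mul 2)).div_const (2 * Real.pi))
    have heq : ((2 - y) / Real.sqrt (y * (4 - y))
        + 2 * (1 / Real.sqrt (y * (4 - y)))) / (2 * Real.pi)
        = Real.sqrt ((4 - y) * y) / (2 * Real.pi * y) := by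
      rw [show (4 - y) * y = y * (4 - y) by ring]
      set s := Real.sqrt (y * (4 - y)) with hs_def
      field_simp
      linear_combination (-1:ℝ) * hss
    exact (heq ▸ hd).hasDerivWithinAt
  have := intervalIntegral.integral_eq_sub_of_hasDeriv_right_of_le (by norm_num)
    hcont hderiv N1
  rw [this, hW]
  norm_num [Real.arcsin_one, Real.arcsin_neg_one]
  field_simp
  ring


lemma logsin_II : IntervalIntegrable (fun θ => Real.log (Real.sin θ)) volume 0 (π/2) := by
  have hπ : (0:ℝ) < π := Real.pi_pos
  rw [intervalIntegrable_iff_integrableOn_Ioc_of_le (by positivity)]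
  have hbase : IntegrableOn (fun θ : ℝ => (12:ℝ) * θ ^ (-(1:ℝ)/4)) (Ioc 0 (π/2)) := by
    have h := intervalIntegrable_rpow' (a := (0:ℝ)) (b := π/2) (r := -(1:ℝ)/4) (by norm_num)
    rw [intervalIntegrable_iff_integrableOn_Ioc_of_le (by positivity)] at h
    exact h.const_mul 12
  refine hbase.mono' ?_ ?_
  · exact (Real.measurable_log.comp Real.continuous_sin.measurable).aestronglyMeasurable
  refine (ae_restrict_iff' measurableSet_Ioc).2 (Filter.Eventually.of_forall ?_)
  rintro θ ⟨h0, hp2⟩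
  have hπ4 : π < 4 := by linarith [Real.pi_lt_d2]
  have hsin_pos : 0 < Real.sin θ := Real.sin_pos_of_pos_of_lt_pi h0 (by linarith)
  have hlow : 2/π * θ ≤ Real.sin θ := Real.mul_le_sin h0.le hp2
  have hq : (1:ℝ)/2 ≤ θ ^ (-(1:ℝ)/4) := rpow_quarter_lower h0 (by linarith)
  have hlogθ : |Real.log θ| ≤ 8 * θ ^ (-(1:ℝ)/4) := abs_log_le ⟨h0, by linarith⟩
  have h1 : Real.log (2/π * θ) ≤ Real.log (Real.sin θ) :=
    Real.log_le_log (by positivity) hlow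
  have h2 : Real.log (Real.sin θ) ≤ 0 := Real.log_nonpos hsin_pos.le (Real.sin_le_one θ)
  have hsplit : Real.log (2/π * θ) = Real.log 2 - Real.log π + Real.log θ := by
    rw [Real.log_mul (by positivity) (by positivity), Real.log_div (by norm_num) (by positivity)]
  have hπ32 : π < 3.2 := by linarith [Real.pi_lt_d2]
  have hlogπ2 : Real.log π - Real.log 2 ≤ 0.6 := by
    have hd : Real.log (π/2) = Real.log π - Real.log 2 :=
      Real.log_div (by positivity) (by norm_num)
    have := Real.log_le_sub_one_of_pos (show (0:ℝ) < π/2 by positivity)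
    linarith
  rw [Real.norm_of_nonpos h2]
  have hneg : -Real.log (Real.sin θ) ≤ -Real.log (2/π * θ) := by linarith
  have habs : -Real.log θ ≤ 8 * θ ^ (-(1:ℝ)/4) := (neg_le_abs _).trans hlogθ
  nlinarith [hq]

lemma logcos_II : IntervalIntegrable (fun θ => Real.log (Real.cos θ)) volume 0 (π/2) := by
  have h := logsin_II.comp_sub_left (π/2)
  have he : (fun x : ℝ => Real.log (Real.sin (π/2 - x))) = fun x => Real.log (Real.cos x) := by
    funext x; rw [Real.sin_pi_div_two_sub]
  rw [he] at h
  simpa using h.symm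

lemma logsin_II' : IntervalIntegrable (fun θ => Real.log (Real.sin θ)) volume (π/2) π := by
  have h := logsin_II.comp_sub_left π
  have he : (fun x : ℝ => Real.log (Real.sin (π - x))) = fun x => Real.log (Real.sin x) := by
    funext x; rw [Real.sin_pi_sub]
  rw [he] at h
  rw [sub_zero, show π - π/2 = π/2 by ring] at h
  exact h.symm

lemma logcos_eq_logsin : ∫ θ in (0:ℝ)..(π/2), Real.log (Real.cos θ)
    = ∫ θ in (0:ℝ)..(π/2), Real.log (Real.sin θ) := by
  have h := intervalIntegral.integral_comp_sub_left
    (a := (0:ℝ)) (b := π/2) (fun x => Real.log (Real.sin x)) (π/2)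
  have he : (fun x : ℝ => Real.log (Real.sin (π/2 - x))) = fun x => Real.log (Real.cos x) := by
    funext x; rw [Real.sin_pi_div_two_sub]
  rw [he] at h
  simpa using h

lemma logsin_second : ∫ θ in (π/2:ℝ)..π, Real.log (Real.sin θ)
    = ∫ θ in (0:ℝ)..(π/2), Real.log (Real.sin θ) := by
  have h := intervalIntegral.integral_comp_sub_left
    (a := (0:ℝ)) (b := π/2) (fun x => Real.log (Real.sin x)) π
  have he : (fun x : ℝ => Real.log (Real.sin (π - x))) = fun x => Real.log (Real.sin x) := by
    funext x; rw [Real.sin_pi_sub]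
  rw [he] at h
  rw [show π - π/2 = π/2 by ring, sub_zero] at h
  exact h.symm

lemma J_val : ∫ θ in (0:ℝ)..(π/2), Real.log (Real.sin θ) = -(π/2) * Real.log 2 := by
  have hπ : (0:ℝ) < π := Real.pi_pos
  set J := ∫ θ in (0:ℝ)..(π/2), Real.log (Real.sin θ) with hJ
  have hfull : ∫ θ in (0:ℝ)..π, Real.log (Real.sin θ) = 2 * J := by
    rw [← intervalIntegral.integral_add_adjacent_intervals logsin_II logsin_II',
      logsin_second]
    ring
  have hdouble : ∫ θ in (0:ℝ)..(π/2), Real.log (Real.sin (2*θ)) = J := by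
    have h := intervalIntegral.integral_comp_mul_left
      (a := (0:ℝ)) (b := π/2) (fun x => Real.log (Real.sin x)) (c := 2) (by norm_num)
    rw [h]
    simp only [smul_eq_mul]
    rw [show (2:ℝ) * 0 = 0 by ring, show (2:ℝ) * (π/2) = π by ring, hfull]
    ring
  have hsum : ∫ θ in (0:ℝ)..(π/2), Real.log (Real.sin (2*θ))
      = π/2 * Real.log 2 + 2 * J := by
    have hcongr : ∫ θ in (0:ℝ)..(π/2), Real.log (Real.sin (2*θ))
        = ∫ θ in (0:ℝ)..(π/2),
          (Real.log 2 + (Real.log (Real.sin θ) + Real.log (Real.cos θ))) := by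
      apply intervalIntegral.integral_congr_ae
      have hae : ∀ᵐ θ : ℝ, θ ≠ π/2 := by
        have : (volume : Measure ℝ) {(π/2:ℝ)} = 0 := measure_singleton _
        exact (MeasureTheory.measure_eq_zero_iff_ae_notMem.mp this).mono (by tauto)
      filter_upwards [hae] with θ hne hmem
      rw [Set.uIoc_of_le (by positivity : (0:ℝ) ≤ π/2)] at hmem
      obtain ⟨h0, h2'⟩ := hmem
      have h2 : θ < π/2 := lt_of_le_of_ne h2' hne
      have hs : 0 < Real.sin θ := Real.sin_pos_of_pos_of_lt_pi h0 (by linarith)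
      have hc : 0 < Real.cos θ := Real.cos_pos_of_mem_Ioo ⟨by linarith, h2⟩
      rw [Real.sin_two_mul, Real.log_mul (by positivity) (by positivity),
        Real.log_mul (by norm_num) hs.ne']
      ring
    rw [hcongr, intervalIntegral.integral_add intervalIntegrable_const
        (logsin_II.add logcos_II),
      intervalIntegral.integral_add logsin_II logcos_II, logcos_eq_logsin]
    simp
    ring
  have hfin : J = π/2 * Real.log 2 + 2 * J := hdouble.symm.trans hsum
  linarith

lemma image_sinsq : (fun θ : ℝ => 4 * Real.sin θ ^ 2) '' (Ioo 0 (π/2)) = Ioo (0:ℝ) 4 := by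
  have hπ : (0:ℝ) < π := Real.pi_pos
  ext y
  constructor
  · rintro ⟨θ, ⟨h0, h2⟩, rfl⟩
    have hs : 0 < Real.sin θ := Real.sin_pos_of_pos_of_lt_pi h0 (by linarith)
    have hc : 0 < Real.cos θ := Real.cos_pos_of_mem_Ioo ⟨by linarith, h2⟩
    have hid : Real.sin θ ^ 2 + Real.cos θ ^ 2 = 1 := Real.sin_sq_add_cos_sq θ
    constructor
    · show (0:ℝ) < 4 * Real.sin θ ^ 2
      nlinarith
    · show 4 * Real.sin θ ^ 2 < 4
      nlinarith [mul_pos hc hc]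
  · rintro ⟨h0, h4⟩
    refine ⟨Real.arcsin (Real.sqrt y / 2), ⟨?_, ?_⟩, ?_⟩
    · rw [Real.arcsin_pos]; positivity
    · rw [Real.arcsin_lt_pi_div_two]
      have : Real.sqrt y < 2 := by
        have : Real.sqrt y < Real.sqrt 4 := (Real.sqrt_lt_sqrt h0.le h4)
        rwa [show Real.sqrt 4 = 2 by
          rw [show (4:ℝ) = 2^2 by norm_num, Real.sqrt_sq (by norm_num : (0:ℝ) ≤ 2)]] at this
      linarith
    · have hy2 : Real.sqrt y / 2 ∈ Icc (-1:ℝ) 1 := by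
        constructor
        · have := Real.sqrt_nonneg y; linarith
        · have : Real.sqrt y ≤ 2 := by
            have h' : Real.sqrt y ≤ Real.sqrt 4 := Real.sqrt_le_sqrt h4.le
            rwa [show Real.sqrt 4 = 2 by
              rw [show (4:ℝ) = 2^2 by norm_num, Real.sqrt_sq (by norm_num : (0:ℝ) ≤ 2)]] at h'
          linarith
      show 4 * Real.sin (Real.arcsin (Real.sqrt y / 2)) ^ 2 = y
      rw [Real.sin_arcsin hy2.1 hy2.2]
      rw [div_pow, Real.sq_sqrt h0.le]
      ring

lemma L0 : ∫ y in (0:ℝ)..4, Real.log (4 - y) / Real.sqrt (y * (4 - y)) = 0 := by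
  have hπ : (0:ℝ) < π := Real.pi_pos
  have hderiv : ∀ θ ∈ Ioo (0:ℝ) (π/2), HasDerivWithinAt (fun θ : ℝ => 4 * Real.sin θ ^ 2)
      (8 * Real.sin θ * Real.cos θ) (Ioo 0 (π/2)) θ := by
    intro θ _
    have h : HasDerivAt (fun θ : ℝ => 4 * Real.sin θ ^ 2)
        (8 * Real.sin θ * Real.cos θ) θ := by
      have := ((Real.hasDerivAt_sin θ).pow 2).const_mul (4:ℝ)
      exact this.congr_deriv (by ring)
    exact h.hasDerivWithinAt
  have hinj : InjOn (fun θ : ℝ => 4 * Real.sin θ ^ 2) (Ioo 0 (π/2)) := by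
    have hmono : StrictMonoOn (fun θ : ℝ => 4 * Real.sin θ ^ 2) (Ioo 0 (π/2)) := by
      intro a ha b hb hab
      have hsa : 0 < Real.sin a := Real.sin_pos_of_pos_of_lt_pi ha.1 (by linarith [ha.2])
      have hsab : Real.sin a < Real.sin b := by
        apply Real.strictMonoOn_sin ⟨by linarith [ha.1], by linarith [ha.2]⟩
          ⟨by linarith [hb.1], by linarith [hb.2]⟩ hab
      simp only
      nlinarith
    exact hmono.injOn
  have hCV := MeasureTheory.integral_image_eq_integral_abs_deriv_smul
    measurableSet_Ioo hderiv hinj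
    (fun y => Real.log (4 - y) / Real.sqrt (y * (4 - y)))
  rw [image_sinsq] at hCV
  rw [intervalIntegral.integral_of_le (by norm_num : (0:ℝ) ≤ 4),
    MeasureTheory.integral_Ioc_eq_integral_Ioo, hCV]
  have hcongr : ∫ θ in Ioo (0:ℝ) (π/2),
      |8 * Real.sin θ * Real.cos θ| •
        (Real.log (4 - 4 * Real.sin θ ^ 2) / Real.sqrt ((4 * Real.sin θ ^ 2) * (4 - 4 * Real.sin θ ^ 2)))
      = ∫ θ in Ioo (0:ℝ) (π/2), (2 * Real.log 4 + 4 * Real.log (Real.cos θ)) := by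
    apply MeasureTheory.setIntegral_congr_fun measurableSet_Ioo
    rintro θ ⟨h0, h2⟩
    have hs : 0 < Real.sin θ := Real.sin_pos_of_pos_of_lt_pi h0 (by linarith)
    have hc : 0 < Real.cos θ := Real.cos_pos_of_mem_Ioo ⟨by linarith, h2⟩
    have hid : Real.sin θ ^ 2 + Real.cos θ ^ 2 = 1 := Real.sin_sq_add_cos_sq θ
    have h4s : 4 - 4 * Real.sin θ ^ 2 = 4 * Real.cos θ ^ 2 := by linarith
    have hsq : (4 * Real.sin θ ^ 2) * (4 - 4 * Real.sin θ ^ 2)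
        = (4 * Real.sin θ * Real.cos θ)^2 := by rw [h4s]; ring
    have hssqrt : Real.sqrt ((4 * Real.sin θ ^ 2) * (4 - 4 * Real.sin θ ^ 2))
        = 4 * Real.sin θ * Real.cos θ := by
      rw [hsq, Real.sqrt_sq (by positivity)]
    have hlog : Real.log (4 - 4 * Real.sin θ ^ 2) = Real.log 4 + 2 * Real.log (Real.cos θ) := by
      rw [h4s, Real.log_mul (by norm_num) (by positivity), Real.log_pow]
      push_cast
      ring
    simp only [smul_eq_mul]
    rw [hssqrt, hlog, abs_of_nonneg (by positivity)]
    field_simp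
    ring
  rw [hcongr]
  have hIcos : IntegrableOn (fun θ : ℝ => Real.log (Real.cos θ)) (Ioo 0 (π/2)) := by
    have h := logcos_II
    rw [intervalIntegrable_iff_integrableOn_Ioc_of_le (by positivity)] at h
    exact h.congr_set_ae Ioo_ae_eq_Ioc
  have hsplit : ∫ θ in Ioo (0:ℝ) (π/2), (2 * Real.log 4 + 4 * Real.log (Real.cos θ))
      = (2 * Real.log 4) * (π/2) + 4 * ∫ θ in Ioo (0:ℝ) (π/2), Real.log (Real.cos θ) := by
    rw [MeasureTheory.integral_add (integrableOn_const (C := 2 * Real.log 4) (by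
        rw [Real.volume_Ioo]; exact ENNReal.ofReal_ne_top)) (hIcos.const_mul 4)]
    rw [MeasureTheory.integral_const, MeasureTheory.integral_const_mul]
    rw [Measure.real, Measure.restrict_apply_univ, Real.volume_Ioo]
    rw [ENNReal.toReal_ofReal (by linarith : (0:ℝ) ≤ π/2 - 0), smul_eq_mul]
    ring_nf
  rw [hsplit]
  have : ∫ θ in Ioo (0:ℝ) (π/2), Real.log (Real.cos θ)
      = ∫ θ in (0:ℝ)..(π/2), Real.log (Real.cos θ) := by
    rw [intervalIntegral.integral_of_le (by positivity : (0:ℝ) ≤ π/2),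
      MeasureTheory.integral_Ioc_eq_integral_Ioo]
  rw [this, logcos_eq_logsin, J_val]
  have h42 : Real.log 4 = 2 * Real.log 2 := by
    rw [show (4:ℝ) = 2^2 by norm_num, Real.log_pow]
    push_cast; ring
  rw [h42]
  ring


lemma log4y_deriv {y : ℝ} (h2 : y < 4) :
    HasDerivAt (fun y : ℝ => Real.log (4 - y)) (-(4 - y)⁻¹) y := by
  have hinner : HasDerivAt (fun y : ℝ => 4 - y) (-1) y := by
    exact ((hasDerivAt_const y (4:ℝ)).sub (hasDerivAt_id' (x := y))).congr_deriv (by norm_num)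
  have h := (Real.hasDerivAt_log (by linarith : (4:ℝ) - y ≠ 0)).comp y hinner
  refine h.congr_deriv ?_
  ring

lemma B1 : ∫ y in (0:ℝ)..4, (2 - y) * Real.log (4 - y) / Real.sqrt (y * (4 - y))
    = 2 * Real.pi := by
  set W : ℝ → ℝ := fun y =>
    Real.sqrt (y * (4 - y)) * Real.log (4 - y) - Real.sqrt (y * (4 - y))
      + 2 * Real.arcsin (y/2 - 1) with hW
  have hcont : ContinuousOn W (Icc 0 4) := by
    have h1 : ContinuousOn (fun y : ℝ => Real.sqrt (y * (4 - y)) * Real.log (4 - y))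
        (Icc 0 4) := by
      have hg : Continuous fun y : ℝ =>
          Real.sqrt y * (2 * (Real.sqrt (4 - y) * Real.log (Real.sqrt (4 - y)))) := by
        have hml : Continuous fun u : ℝ => u * Real.log u := Real.continuous_mul_log
        exact Real.continuous_sqrt.mul (continuous_const.mul
          (hml.comp (Real.continuous_sqrt.comp (continuous_const.sub continuous_id))))
      refine ContinuousOn.congr hg.continuousOn ?_
      rintro y ⟨hy0, hy4⟩
      have h4y : (0:ℝ) ≤ 4 - y := by linarith
      show Real.sqrt (y * (4 - y)) * Real.log (4 - y)
        = Real.sqrt y * (2 * (Real.sqrt (4 - y) * Real.log (Real.sqrt (4 - y))))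
      rw [Real.sqrt_mul hy0 _, Real.log_sqrt h4y]
      ring
    refine (h1.sub ((Real.continuous_sqrt.comp
      (continuous_id.mul (continuous_const.sub continuous_id))).continuousOn)).add
      (continuous_const.mul
        (Real.continuous_arcsin.comp ((continuous_id.div_const 2).sub
          continuous_const))).continuousOn
  have hderiv : ∀ y ∈ Ioo (0:ℝ) 4, HasDerivWithinAt W
      ((2 - y) * Real.log (4 - y) / Real.sqrt (y * (4 - y))) (Ioi y) y := by
    rintro y ⟨h1, h2⟩
    have hY : 0 < y * (4 - y) := by nlinarith
    have hs0 : 0 < Real.sqrt (y * (4 - y)) := Real.sqrt_pos.2 hY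
    have hd : HasDerivAt W
        (((2 - y) / Real.sqrt (y * (4 - y)) * Real.log (4 - y)
          + Real.sqrt (y * (4 - y)) * (-(4 - y)⁻¹))
         - (2 - y) / Real.sqrt (y * (4 - y)) + 2 * (1 / Real.sqrt (y * (4 - y)))) y := by
      exact (((sqrtY_deriv h1 h2).mul (log4y_deriv h2)).sub (sqrtY_deriv h1 h2)).add
        ((arcsin_deriv h1 h2).const_mul 2)
    have heq : (((2 - y) / Real.sqrt (y * (4 - y)) * Real.log (4 - y)
          + Real.sqrt (y * (4 - y)) * (-(4 - y)⁻¹))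
         - (2 - y) / Real.sqrt (y * (4 - y)) + 2 * (1 / Real.sqrt (y * (4 - y))))
        = (2 - y) * Real.log (4 - y) / Real.sqrt (y * (4 - y)) := by
      set s := Real.sqrt (y * (4 - y)) with hs_def
      have hss : s * s = y * (4 - y) := Real.mul_self_sqrt hY.le
      have h4y : (4:ℝ) - y ≠ 0 := by linarith
      field_simp
      ring_nf
      linear_combination (-1:ℝ) * hss
    exact (heq ▸ hd).hasDerivWithinAt
  have hFTC := intervalIntegral.integral_eq_sub_of_hasDeriv_right_of_le (by norm_num)
    hcont hderiv N3
  rw [hFTC, hW]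
  norm_num [Real.arcsin_one, Real.arcsin_neg_one]
  ring

lemma lemB : ∫ y in (0:ℝ)..4,
    Real.log (4 - y) * (Real.sqrt ((4 - y) * y) / (2 * Real.pi * y)) = 1 := by
  have hπ : (0:ℝ) < Real.pi := Real.pi_pos
  have hsplit : ∫ y in (0:ℝ)..4,
      Real.log (4 - y) * (Real.sqrt ((4 - y) * y) / (2 * Real.pi * y))
      = ∫ y in (0:ℝ)..4,
        ((1/(2*Real.pi)) * ((2 - y) * Real.log (4 - y) / Real.sqrt (y * (4 - y)))
         + (1/Real.pi) * (Real.log (4 - y) / Real.sqrt (y * (4 - y)))) := by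
    apply intervalIntegral.integral_congr_ae
    have hae : ∀ᵐ y : ℝ, y ≠ 4 := by
      have : (volume : Measure ℝ) {(4:ℝ)} = 0 := measure_singleton 4
      exact (MeasureTheory.measure_eq_zero_iff_ae_notMem.mp this).mono (by tauto)
    filter_upwards [hae] with y hy4 hymem
    rw [Set.uIoc_of_le (by norm_num : (0:ℝ) ≤ 4)] at hymem
    obtain ⟨h1, h2'⟩ := hymem
    have h2 : y < 4 := lt_of_le_of_ne h2' hy4
    have hY : 0 < y * (4 - y) := by nlinarith
    have hs0 : 0 < Real.sqrt (y * (4 - y)) := Real.sqrt_pos.2 hY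
    have hss : Real.sqrt (y * (4 - y)) * Real.sqrt (y * (4 - y)) = y * (4 - y) :=
      Real.mul_self_sqrt hY.le
    rw [show (4 - y) * y = y * (4 - y) by ring]
    set s := Real.sqrt (y * (4 - y)) with hs_def
    field_simp
    ring_nf
    linear_combination (Real.log (4 - y)) * hss
  rw [hsplit, intervalIntegral.integral_add ((N3.const_mul _)) ((N4.const_mul _)),
    intervalIntegral.integral_const_mul, intervalIntegral.integral_const_mul, B1, L0]
  field_simp
  ring


/-- The Stieltjes transform of μ_MP at t > 4. -/
lemma lemA {t : ℝ} (ht : 4 < t) :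
    ∫ y in (0:ℝ)..4, (t - y)⁻¹ * (Real.sqrt ((4 - y) * y) / (2 * Real.pi * y))
      = 1/2 - Real.sqrt ((t - 4) / (4 * t)) := by
  have hπ : (0:ℝ) < Real.pi := Real.pi_pos
  have ht0 : (0:ℝ) < t := by linarith
  have ht4 : (0:ℝ) < t - 4 := by linarith
  have hT : (0:ℝ) < t * (t - 4) := by positivity
  have hsT : 0 < Real.sqrt (t * (t - 4)) := Real.sqrt_pos.2 hT
  have hssT : Real.sqrt (t * (t - 4)) * Real.sqrt (t * (t - 4)) = t * (t - 4) :=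
    Real.mul_self_sqrt hT.le
  set w : ℝ → ℝ := fun y => ((t - 2) * y - 2 * t) / (2 * (t - y)) with hw
  set Φ : ℝ → ℝ := fun y => Real.arcsin (y/2 - 1) / (2 * Real.pi)
    - (Real.sqrt (t * (t - 4)) / (2 * Real.pi * t)) * Real.arcsin (w y) with hΦ
  have hwcont : ContinuousOn w (Icc 0 4) := by
    apply ContinuousOn.div
    · exact Continuous.continuousOn (by continuity)
    · exact Continuous.continuousOn (by continuity)
    · rintro y ⟨_, hy4⟩
      have : (0:ℝ) < t - y := by linarith
      positivity
  have hcont : ContinuousOn Φ (Icc 0 4) := by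
    apply ContinuousOn.sub
    · exact (Real.continuous_arcsin.comp
        ((continuous_id.div_const 2).sub continuous_const)).continuousOn.div_const _
    · exact continuousOn_const.mul (Real.continuous_arcsin.comp_continuousOn hwcont)
  have hderiv : ∀ y ∈ Ioo (0:ℝ) 4, HasDerivWithinAt Φ
      ((t - y)⁻¹ * (Real.sqrt ((4 - y) * y) / (2 * Real.pi * y))) (Ioi y) y := by
    rintro y ⟨h1, h2⟩
    have hty : (0:ℝ) < t - y := by linarith
    have hY : 0 < y * (4 - y) := by nlinarith
    have hsY : 0 < Real.sqrt (y * (4 - y)) := Real.sqrt_pos.2 hY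
    have hssY : Real.sqrt (y * (4 - y)) * Real.sqrt (y * (4 - y)) = y * (4 - y) :=
      Real.mul_self_sqrt hY.le
    -- derivative of w
    have hwd : HasDerivAt w (t * (t - 4) / (2 * (t - y)^2)) y := by
      have hnum : HasDerivAt (fun y : ℝ => (t - 2) * y - 2 * t) (t - 2) y := by
        simpa using ((hasDerivAt_id' (x := y)).const_mul (t - 2)).sub_const (2*t)
      have hden : HasDerivAt (fun y : ℝ => 2 * (t - y)) (-2) y := by
        have := ((hasDerivAt_const y t).sub (hasDerivAt_id' (x := y))).const_mul (2:ℝ)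
        exact this.congr_deriv (by ring)
      have h := hnum.div hden (by positivity)
      refine h.congr_deriv ?_
      field_simp
      ring
    -- w stays in (-1,1)
    have hw2 : 1 - w y ^ 2 = t * (t - 4) * (y * (4 - y)) / (2 * (t - y))^2 := by
      rw [hw]
      field_simp
      ring
    have hw2pos : 0 < 1 - w y ^ 2 := by rw [hw2]; positivity
    have hwne1 : w y ≠ 1 := by intro h; rw [h] at hw2pos; norm_num at hw2pos
    have hwnem1 : w y ≠ -1 := by intro h; rw [h] at hw2pos; norm_num at hw2pos
    have hsq1w : Real.sqrt (1 - w y ^ 2)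
        = Real.sqrt (t * (t - 4)) * Real.sqrt (y * (4 - y)) / (2 * (t - y)) := by
      rw [hw2, Real.sqrt_div (by positivity), Real.sqrt_mul hT.le,
        Real.sqrt_sq (by positivity)]
    have harc : HasDerivAt (fun y => Real.arcsin (w y))
        (1 / Real.sqrt (1 - w y ^ 2) * (t * (t - 4) / (2 * (t - y)^2))) y :=
      (Real.hasDerivAt_arcsin hwnem1 hwne1).comp y hwd
    have hd : HasDerivAt Φ
        (1 / Real.sqrt (y * (4 - y)) / (2 * Real.pi)
          - Real.sqrt (t * (t - 4)) / (2 * Real.pi * t)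
            * (1 / Real.sqrt (1 - w y ^ 2) * (t * (t - 4) / (2 * (t - y)^2)))) y :=
      ((arcsin_deriv h1 h2).div_const (2 * Real.pi)).sub (harc.const_mul _)
    have heq : (1 / Real.sqrt (y * (4 - y)) / (2 * Real.pi)
          - Real.sqrt (t * (t - 4)) / (2 * Real.pi * t)
            * (1 / Real.sqrt (1 - w y ^ 2) * (t * (t - 4) / (2 * (t - y)^2))))
        = (t - y)⁻¹ * (Real.sqrt ((4 - y) * y) / (2 * Real.pi * y)) := by
      rw [hsq1w, show (4 - y) * y = y * (4 - y) by ring]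
      set s := Real.sqrt (y * (4 - y)) with hs_def
      set S := Real.sqrt (t * (t - 4)) with hS_def
      field_simp
      ring_nf
      linear_combination (-1:ℝ) * hssY
    exact (heq ▸ hd).hasDerivWithinAt
  have hFTC := intervalIntegral.integral_eq_sub_of_hasDeriv_right_of_le (by norm_num)
    hcont hderiv (N5 ht)
  rw [hFTC, hΦ]
  have hw4 : w 4 = 1 := by
    rw [hw]
    field_simp
    ring
  have hw0 : w 0 = -1 := by
    rw [hw]
    field_simp
    rw [div_eq_iff (by linarith)]; ring
  simp only [hw4, hw0, Real.arcsin_one, Real.arcsin_neg_one]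
  have hfinal : Real.sqrt ((t - 4) / (4 * t)) = Real.sqrt (t * (t - 4)) / (2 * t) := by
    rw [show (t - 4) / (4 * t) = (t * (t - 4)) / (2 * t)^2 by field_simp; ring,
      Real.sqrt_div hT.le, Real.sqrt_sq (by positivity)]
  rw [hfinal]
  norm_num
  field_simp
  ring


noncomputable def fMP (y : ℝ) : ℝ := Real.sqrt ((4 - y) * y) / (2 * Real.pi * y)

lemma meas_fMP : Measurable fMP := meas_f
lemma N2' : IntervalIntegrable (fun y => Real.log (4 - y) * fMP y) volume 0 4 := N2
lemma N6' {x : ℝ} (hx : 4 < x) :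
    IntervalIntegrable (fun y => Real.log (x - y) * fMP y) volume 0 4 := N6 hx
lemma lemB' : ∫ y in (0:ℝ)..4, Real.log (4 - y) * fMP y = 1 := lemB
lemma lemA' {t : ℝ} (ht : 4 < t) :
    ∫ y in (0:ℝ)..4, (t - y)⁻¹ * fMP y = 1/2 - Real.sqrt ((t - 4) / (4 * t)) := lemA ht

lemma fMP_nonneg {y : ℝ} (hy : 0 ≤ y) : 0 ≤ fMP y := by
  unfold fMP
  positivity

lemma fMP_four : fMP 4 = 0 := by unfold fMP; norm_num

lemma fMP_zero : fMP 0 = 0 := by unfold fMP; norm_num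

lemma inner_log {x y : ℝ} (hx : 4 < x) (hy : y < 4) :
    ∫ t in (4:ℝ)..x, (t - y)⁻¹ = Real.log (x - y) - Real.log (4 - y) := by
  have h1 : ∫ t in (4:ℝ)..x, (t - y)⁻¹ = ∫ u in (4 - y)..(x - y), u⁻¹ := by
    have := intervalIntegral.integral_comp_sub_right (a := (4:ℝ)) (b := x)
      (fun u => u⁻¹) y
    simpa using this
  have h0 : (0:ℝ) ∉ Set.uIcc (4 - y) (x - y) := by
    rw [Set.uIcc_of_le (by linarith : 4 - y ≤ x - y)]
    intro hc
    have := hc.1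
    linarith
  rw [h1, integral_inv h0, Real.log_div (by linarith) (by linarith)]

/-- Fubini step. -/
lemma fubini_step {x : ℝ} (hx : 4 < x) :
    ∫ y in (0:ℝ)..4, (∫ t in (4:ℝ)..x, (t - y)⁻¹) * fMP y
      = ∫ t in (4:ℝ)..x, (1/2 - Real.sqrt ((t - 4) / (4 * t))) := by
  set μ := volume.restrict (Ioc (0:ℝ) 4) with hμ
  set ν := volume.restrict (Ioc (4:ℝ) x) with hν
  set G : ℝ → ℝ → ℝ := fun y t => (t - y)⁻¹ * fMP y with hG
  have hmeas : AEStronglyMeasurable (Function.uncurry G) (μ.prod ν) := by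
    apply Measurable.aestronglyMeasurable
    exact ((measurable_snd.sub measurable_fst).inv).mul (meas_fMP.comp measurable_fst)
  -- first slice integrability
  have hslice : ∀ y ∈ Ioc (0:ℝ) 4, Integrable (G y) ν := by
    rintro y ⟨hy0, hy4⟩
    rcases eq_or_lt_of_le hy4 with h4 | h4
    · have : G y = fun _ => 0 := by
        funext t
        rw [hG]
        show (t - y)⁻¹ * fMP y = 0
        rw [h4, fMP_four, mul_zero]
      rw [this]
      exact integrable_zero _ _ _
    · have hcont : ContinuousOn (G y) (Icc 4 x) := by
        apply ContinuousOn.mul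
        · apply ContinuousOn.inv₀
          · exact (continuous_id.sub continuous_const).continuousOn
          · rintro t ⟨ht4, _⟩
            have : 0 < t - y := by linarith
            exact this.ne'
        · exact continuousOn_const
      exact (hcont.integrableOn_Icc).mono_set Ioc_subset_Icc_self
  -- the y-indexed norm integral
  have hnormint : ∀ y ∈ Ioc (0:ℝ) 4,
      (∫ t, ‖G y t‖ ∂ν) = Real.log (x - y) * fMP y - Real.log (4 - y) * fMP y := by
    rintro y ⟨hy0, hy4⟩
    rcases eq_or_lt_of_le hy4 with h4 | h4
    · have hz : G y = fun _ => 0 := by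
        funext t
        rw [hG]
        show (t - y)⁻¹ * fMP y = 0
        rw [h4, fMP_four, mul_zero]
      rw [hz]
      simp only [norm_zero, MeasureTheory.integral_zero, h4, fMP_four, mul_zero, sub_zero]
    · have h1 : (∫ t, ‖G y t‖ ∂ν) = ∫ t, G y t ∂ν := by
        rw [hν]
        apply MeasureTheory.setIntegral_congr_fun measurableSet_Ioc
        rintro t ⟨ht4, _⟩
        have hty : 0 < t - y := by linarith
        have : 0 ≤ G y t := mul_nonneg (by positivity) (fMP_nonneg hy0.le)
        simp [Real.norm_of_nonneg this]
      rw [h1, hν, hG]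
      have h2 : ∫ t in Ioc (4:ℝ) x, (t - y)⁻¹ * fMP y
          = (∫ t in Ioc (4:ℝ) x, (t - y)⁻¹) * fMP y :=
        MeasureTheory.integral_mul_const _ _
      rw [h2, ← intervalIntegral.integral_of_le (by linarith : (4:ℝ) ≤ x),
        inner_log hx h4]
      ring
  have hint : Integrable (Function.uncurry G) (μ.prod ν) := by
    rw [MeasureTheory.integrable_prod_iff hmeas]
    constructor
    · rw [hμ, ae_restrict_iff' measurableSet_Ioc]
      exact Filter.Eventually.of_forall hslice
    · have hnice : IntegrableOn
          (fun y => Real.log (x - y) * fMP y - Real.log (4 - y) * fMP y)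
          (Ioc (0:ℝ) 4) := by
        have h := (N6' hx).sub N2'
        rwa [intervalIntegrable_iff_integrableOn_Ioc_of_le (by norm_num)] at h
      rw [hμ]
      exact hnice.congr_fun (fun y hy => (hnormint y hy).symm) measurableSet_Ioc
  have hswap := MeasureTheory.integral_integral_swap hint
  -- LHS to iterated form
  have hL : ∫ y in (0:ℝ)..4, (∫ t in (4:ℝ)..x, (t - y)⁻¹) * fMP y
      = ∫ y, (∫ t, G y t ∂ν) ∂μ := by
    rw [intervalIntegral.integral_of_le (by norm_num : (0:ℝ) ≤ 4), ← hμ]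
    apply MeasureTheory.setIntegral_congr_fun measurableSet_Ioc
    rintro y hy
    rw [hν, hG]
    show (∫ t in (4:ℝ)..x, (t - y)⁻¹) * fMP y = ∫ t in Ioc (4:ℝ) x, (t - y)⁻¹ * fMP y
    have h2 : ∫ t in Ioc (4:ℝ) x, (t - y)⁻¹ * fMP y
        = (∫ t in Ioc (4:ℝ) x, (t - y)⁻¹) * fMP y :=
      MeasureTheory.integral_mul_const _ _
    rw [h2, ← intervalIntegral.integral_of_le (by linarith : (4:ℝ) ≤ x)]
  -- RHS from swapped form
  have hR : ∫ t, (∫ y, G y t ∂μ) ∂ν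
      = ∫ t in (4:ℝ)..x, (1/2 - Real.sqrt ((t - 4) / (4 * t))) := by
    rw [intervalIntegral.integral_of_le (by linarith : (4:ℝ) ≤ x), hν]
    apply MeasureTheory.setIntegral_congr_fun measurableSet_Ioc
    rintro t ⟨ht4, _⟩
    rw [hμ, hG]
    show ∫ y in Ioc (0:ℝ) 4, (t - y)⁻¹ * fMP y = 1/2 - Real.sqrt ((t - 4) / (4 * t))
    rw [show ∫ y in Ioc (0:ℝ) 4, (t - y)⁻¹ * fMP y
      = ∫ y in (0:ℝ)..4, (t - y)⁻¹ * fMP y from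
      (intervalIntegral.integral_of_le (by norm_num : (0:ℝ) ≤ 4)).symm]
    exact lemA' ht4
  rw [hL, hswap, hR]


end MPaux

open MPaux

/-- For `x ≥ 4`,
`φ(μ_MP, x) = ∫₀⁴ log|x-y| dμ_MP(y) - x/2 = -I_MP(x) - 1`, where `μ_MP` has
density `√((4-y)y)/(2πy)` on `[0,4]` and `I_MP(x) = ∫₄ˣ √((t-4)/(4t)) dt`. -/
theorem mp_log_potential (x : ℝ) (hx : 4 ≤ x) :
    (∫ y in (0:ℝ)..4, Real.log |x - y| * (Real.sqrt ((4 - y) * y) / (2 * Real.pi * y))) - x / 2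
      = -(∫ t in (4:ℝ)..x, Real.sqrt ((t - 4) / (4 * t))) - 1 := by
  show (∫ y in (0:ℝ)..4, Real.log |x - y| * fMP y) - x / 2
      = -(∫ t in (4:ℝ)..x, Real.sqrt ((t - 4) / (4 * t))) - 1
  rcases eq_or_lt_of_le hx with h4 | h4
  · -- x = 4
    subst h4
    rw [intervalIntegral.integral_same]
    have hone : (∫ y in (0:ℝ)..4, Real.log |4 - y| * fMP y) = 1 := by
      rw [show (∫ y in (0:ℝ)..4, Real.log |4 - y| * fMP y)
          = ∫ y in (0:ℝ)..4, Real.log (4 - y) * fMP y from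
        intervalIntegral.integral_congr (fun y hy => by
          rw [Set.uIcc_of_le (by norm_num : (0:ℝ) ≤ 4)] at hy
          show Real.log |4 - y| * fMP y = Real.log (4 - y) * fMP y
          rw [abs_of_nonneg (by linarith [hy.2])])]
      exact lemB'
    rw [hone]
    norm_num
  · -- 4 < x
    have hII2 : IntervalIntegrable (fun y => (∫ t in (4:ℝ)..x, (t - y)⁻¹) * fMP y)
        volume 0 4 := by
      rw [intervalIntegrable_iff_integrableOn_Ioc_of_le (by norm_num)]
      have hnice : IntegrableOn
          (fun y => Real.log (x - y) * fMP y - Real.log (4 - y) * fMP y)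
          (Ioc (0:ℝ) 4) := by
        have h := (N6' h4).sub N2'
        rwa [intervalIntegrable_iff_integrableOn_Ioc_of_le (by norm_num)] at h
      apply hnice.congr_fun _ measurableSet_Ioc
      rintro y ⟨hy0, hy4⟩
      rcases eq_or_lt_of_le hy4 with heq | hlt
      · subst heq
        show Real.log (x - 4) * fMP 4 - Real.log (4 - 4) * fMP 4
          = (∫ t in (4:ℝ)..x, (t - 4)⁻¹) * fMP 4
        rw [fMP_four]
        ring
      · show Real.log (x - y) * fMP y - Real.log (4 - y) * fMP y
          = (∫ t in (4:ℝ)..x, (t - y)⁻¹) * fMP y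
        rw [inner_log h4 hlt]
        ring
    have hdecomp : (∫ y in (0:ℝ)..4, Real.log |x - y| * fMP y)
        = (∫ y in (0:ℝ)..4, Real.log (4 - y) * fMP y)
          + ∫ y in (0:ℝ)..4, (∫ t in (4:ℝ)..x, (t - y)⁻¹) * fMP y := by
      rw [show (∫ y in (0:ℝ)..4, Real.log |x - y| * fMP y)
          = ∫ y in (0:ℝ)..4, (Real.log (4 - y) * fMP y
              + (∫ t in (4:ℝ)..x, (t - y)⁻¹) * fMP y) from
        intervalIntegral.integral_congr (fun y hy => by
          rw [Set.uIcc_of_le (by norm_num : (0:ℝ) ≤ 4)] at hy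
          obtain ⟨hy0, hy4⟩ := hy
          show Real.log |x - y| * fMP y = _
          rcases eq_or_lt_of_le hy4 with heq | hlt
          · subst heq
            rw [fMP_four]
            ring
          · rw [abs_of_pos (by linarith), inner_log h4 hlt]
            ring)]
      exact intervalIntegral.integral_add N2' hII2
    rw [hdecomp, lemB', fubini_step h4]
    have hIg : IntervalIntegrable (fun t => Real.sqrt ((t - 4) / (4 * t))) volume 4 x := by
      apply ContinuousOn.intervalIntegrable
      apply ContinuousOn.sqrt
      apply ContinuousOn.div
      · exact (continuous_id.sub continuous_const).continuousOn
      · exact (continuous_const.mul continuous_id).continuousOn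
      · intro t ht
        rw [Set.uIcc_of_le (by linarith : (4:ℝ) ≤ x)] at ht
        have : (0:ℝ) < t := by linarith [ht.1]
        positivity
    rw [intervalIntegral.integral_sub intervalIntegrable_const hIg,
      intervalIntegral.integral_const]
    simp only [smul_eq_mul]
    ring
end

section
/- The function z ↦ φ(μ_MP, z) = ∫₀⁴ log|z-y| dμ_MP(y) - z/2 is strictly decreasing on [4,∞). -/
open Real Set MeasureTheory

lemma neg_log_le_two_div_sqrt {t : ℝ} (ht : 0 < t) : -Real.log t ≤ 2 / Real.sqrt t := by
  have hs : 0 < Real.sqrt t := Real.sqrt_pos.2 ht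
  have h1 : Real.log ((Real.sqrt t)⁻¹) ≤ (Real.sqrt t)⁻¹ - 1 :=
    Real.log_le_sub_one_of_pos (inv_pos.2 hs)
  rw [Real.log_inv] at h1
  have h2 : Real.log t = 2 * Real.log (Real.sqrt t) := by
    rw [Real.log_sqrt ht.le]; ring
  rw [h2, div_eq_mul_inv]
  linarith

lemma mp_intervalIntegrable {z : ℝ} (hz : 4 ≤ z) :
    IntervalIntegrable
      (fun y => Real.log |z - y| * (Real.sqrt ((4 - y) * y) / (2 * Real.pi * y)))
      volume 0 4 := by
  have hπ : 0 < Real.pi := Real.pi_pos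
  have hlz : 0 ≤ Real.log z := Real.log_nonneg (by linarith)
  set C : ℝ := (2 * Real.log z + 2) / (2 * Real.pi) with hC
  have hC0 : 0 ≤ C := by positivity
  rw [intervalIntegrable_iff_integrableOn_Ioc_of_le (by norm_num)]
  have hint : IntegrableOn (fun y : ℝ => C * y ^ (-(1/2) : ℝ)) (Ioc 0 4) := by
    have h := (intervalIntegral.intervalIntegrable_rpow' (a := 0) (b := 4) (r := -(1/2))
      (by norm_num)).const_mul C
    rwa [intervalIntegrable_iff_integrableOn_Ioc_of_le (by norm_num)] at h
  apply hint.mono'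
  · apply Measurable.aestronglyMeasurable
    have m1 : Measurable fun y : ℝ => Real.sqrt ((4 - y) * y) :=
      Real.continuous_sqrt.measurable.comp ((measurable_const.sub measurable_id).mul measurable_id)
    have m2 : Measurable fun y : ℝ => 2 * Real.pi * y := by
      simpa [mul_comm] using (measurable_id.const_mul (2 * Real.pi))
    exact (Real.measurable_log.comp ((measurable_const.sub measurable_id).abs)).mul (m1.div m2)
  · rw [ae_restrict_iff' measurableSet_Ioc]
    filter_upwards with y
    rintro ⟨hy0, hy4⟩
    rcases eq_or_lt_of_le hy4 with rfl | hy4'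
    · simp only [show (4:ℝ) - 4 = 0 by ring, zero_mul, Real.sqrt_zero, zero_div,
        mul_zero, norm_zero]
      positivity
    · have h4y : (0:ℝ) < 4 - y := by linarith
      have hzy : 0 < z - y := by linarith
      have hs : 0 < Real.sqrt (4 - y) := Real.sqrt_pos.2 h4y
      have ht : 0 < Real.sqrt y := Real.sqrt_pos.2 hy0
      have hus : Real.sqrt ((4 - y) * y) = Real.sqrt (4 - y) * Real.sqrt y :=
        Real.sqrt_mul h4y.le y
      have hyy : Real.sqrt y * Real.sqrt y = y := Real.mul_self_sqrt hy0.le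
      have hrpow : y ^ (-(1/2) : ℝ) = (Real.sqrt y)⁻¹ := by
        rw [Real.rpow_neg hy0.le, Real.sqrt_eq_rpow]
      have habs : |z - y| = z - y := abs_of_pos hzy
      have hub : Real.log (z - y) ≤ Real.log z := Real.log_le_log hzy (by linarith)
      have hlb : -(Real.log z + 2 / Real.sqrt (4 - y)) ≤ Real.log (z - y) := by
        have h1 : -Real.log (z - y) ≤ 2 / Real.sqrt (z - y) := neg_log_le_two_div_sqrt hzy
        have h2 : Real.sqrt (4 - y) ≤ Real.sqrt (z - y) := Real.sqrt_le_sqrt (by linarith)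
        have h3 : 2 / Real.sqrt (z - y) ≤ 2 / Real.sqrt (4 - y) := by gcongr
        linarith
      have hlog_abs : |Real.log (z - y)| ≤ Real.log z + 2 / Real.sqrt (4 - y) := by
        rw [abs_le]
        constructor
        · exact hlb
        · have : 0 ≤ 2 / Real.sqrt (4 - y) := by positivity
          linarith
      have hsle : Real.sqrt (4 - y) ≤ 2 := by
        rw [show (2:ℝ) = Real.sqrt 4 by
          rw [show (4:ℝ) = 2 ^ 2 by norm_num, Real.sqrt_sq (by norm_num : (0:ℝ) ≤ 2)]]
        exact Real.sqrt_le_sqrt (by linarith)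
      have key : |Real.log (z - y)| * Real.sqrt (4 - y) ≤ 2 * Real.log z + 2 := by
        have hla : 0 ≤ |Real.log (z - y)| := abs_nonneg _
        have hmul : |Real.log (z - y)| * Real.sqrt (4 - y)
            ≤ (Real.log z + 2 / Real.sqrt (4 - y)) * Real.sqrt (4 - y) := by
          gcongr
        have heq : (Real.log z + 2 / Real.sqrt (4 - y)) * Real.sqrt (4 - y)
            = Real.log z * Real.sqrt (4 - y) + 2 := by
          field_simp
        nlinarith [hmul, heq, hsle, hlz]
      rw [Real.norm_eq_abs, habs, abs_mul, hrpow]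
      have habs2 : |Real.sqrt ((4 - y) * y) / (2 * Real.pi * y)|
          = Real.sqrt ((4 - y) * y) / (2 * Real.pi * y) := by
        rw [abs_of_nonneg]; positivity
      rw [habs2, hus]
      have heq2 : Real.sqrt (4 - y) * Real.sqrt y / (2 * Real.pi * y)
          = Real.sqrt (4 - y) / (2 * Real.pi * Real.sqrt y) := by
        rw [div_eq_div_iff (by positivity) (by positivity)]
        linear_combination (Real.sqrt (4 - y) * 2 * Real.pi) * hyy
      rw [heq2]
      calc |Real.log (z - y)| * (Real.sqrt (4 - y) / (2 * Real.pi * Real.sqrt y))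
          = (|Real.log (z - y)| * Real.sqrt (4 - y)) / (2 * Real.pi * Real.sqrt y) := by
            ring
        _ ≤ (2 * Real.log z + 2) / (2 * Real.pi * Real.sqrt y) := by gcongr
        _ = C * (Real.sqrt y)⁻¹ := by rw [hC]; field_simp

lemma mp_inv_sqrt_integrable :
    IntervalIntegrable (fun y : ℝ => (Real.sqrt ((4 - y) * y))⁻¹) volume 0 4 := by
  have h12 : IntervalIntegrable (fun y : ℝ => (Real.sqrt ((4 - y) * y))⁻¹) volume 0 2 := by
    rw [intervalIntegrable_iff_integrableOn_Ioc_of_le (by norm_num)]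
    have hint : IntegrableOn (fun y : ℝ => (Real.sqrt 2)⁻¹ * y ^ (-(1/2) : ℝ)) (Ioc 0 2) := by
      have h := (intervalIntegral.intervalIntegrable_rpow' (a := 0) (b := 2) (r := -(1/2))
        (by norm_num)).const_mul (Real.sqrt 2)⁻¹
      rwa [intervalIntegrable_iff_integrableOn_Ioc_of_le (by norm_num)] at h
    apply hint.mono'
    · exact (Measurable.inv (Real.continuous_sqrt.measurable.comp
        ((measurable_const.sub measurable_id).mul measurable_id))).aestronglyMeasurable
    · rw [ae_restrict_iff' measurableSet_Ioc]
      filter_upwards with y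
      rintro ⟨hy0, hy2⟩
      have hq : 0 < Real.sqrt ((4 - y) * y) := Real.sqrt_pos.2 (by nlinarith)
      have hsy : 0 < Real.sqrt y := Real.sqrt_pos.2 hy0
      have hrpow : y ^ (-(1/2) : ℝ) = (Real.sqrt y)⁻¹ := by
        rw [Real.rpow_neg hy0.le, Real.sqrt_eq_rpow]
      have h1 : Real.sqrt 2 * Real.sqrt y ≤ Real.sqrt ((4 - y) * y) := by
        rw [← Real.sqrt_mul (by norm_num : (0:ℝ) ≤ 2)]
        exact Real.sqrt_le_sqrt (by nlinarith)
      rw [Real.norm_eq_abs, abs_of_nonneg (by positivity), hrpow]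
      calc (Real.sqrt ((4 - y) * y))⁻¹ ≤ (Real.sqrt 2 * Real.sqrt y)⁻¹ := by
            gcongr
        _ = (Real.sqrt 2)⁻¹ * (Real.sqrt y)⁻¹ := by rw [mul_inv]
  have h24 : IntervalIntegrable (fun y : ℝ => (Real.sqrt ((4 - y) * y))⁻¹) volume 2 4 := by
    have h := (h12.comp_sub_left 4).symm
    norm_num at h
    have heq : ∀ x : ℝ, (Real.sqrt ((4 - (4 - x)) * (4 - x)))⁻¹
        = (Real.sqrt ((4 - x) * x))⁻¹ := by
      intro x
      rw [show (4:ℝ) - (4 - x) = x by ring, mul_comm]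
    simpa [heq, mul_comm] using h
  exact h12.trans h24

lemma mp_inv_sqrt_integral :
    ∫ y in (0:ℝ)..4, (Real.sqrt ((4 - y) * y))⁻¹ = Real.pi := by
  have h4 : Real.sqrt 4 = 2 := by
    rw [show (4:ℝ) = 2 ^ 2 by norm_num, Real.sqrt_sq (by norm_num : (0:ℝ) ≤ 2)]
  have hderiv : ∀ y ∈ Ioo (0:ℝ) 4,
      HasDerivWithinAt (fun x : ℝ => Real.arcsin ((x - 2) / 2))
        ((Real.sqrt ((4 - y) * y))⁻¹) (Ioi y) y := by
    intro y hy
    obtain ⟨hy0, hy4⟩ := hy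
    have hq : (0:ℝ) < (4 - y) * y := by nlinarith
    have hsq : 0 < Real.sqrt ((4 - y) * y) := Real.sqrt_pos.2 hq
    have hx1 : (y - 2) / 2 ≠ -1 := by
      intro h; rw [div_eq_iff (by norm_num : (2:ℝ) ≠ 0)] at h; linarith
    have hx2 : (y - 2) / 2 ≠ 1 := by
      intro h; rw [div_eq_iff (by norm_num : (2:ℝ) ≠ 0)] at h; linarith
    have h1 := Real.hasDerivAt_arcsin hx1 hx2
    have h2 : HasDerivAt (fun x : ℝ => (x - 2) / 2) (1 / 2) y := by
      simpa using ((hasDerivAt_id y).sub_const 2).div_const 2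
    have h3 := h1.comp y h2
    have heq : 1 / Real.sqrt (1 - ((y - 2) / 2) ^ 2) * (1 / 2)
        = (Real.sqrt ((4 - y) * y))⁻¹ := by
      rw [show 1 - ((y - 2) / 2) ^ 2 = ((4 - y) * y) / 4 by ring,
        Real.sqrt_div hq.le, h4]
      have hs1 : Real.sqrt (4 - y) ≠ 0 := ne_of_gt (Real.sqrt_pos.2 (by linarith))
      have hs2 : Real.sqrt y ≠ 0 := ne_of_gt (Real.sqrt_pos.2 hy0)
      have hs3 : Real.sqrt ((4 - y) * y) ≠ 0 := hsq.ne'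
      field_simp
    have h3' : HasDerivAt (fun x : ℝ => Real.arcsin ((x - 2) / 2))
        ((Real.sqrt ((4 - y) * y))⁻¹) y := by
      rw [← heq]
      exact h3
    exact h3'.hasDerivWithinAt
  have hcont : ContinuousOn (fun x : ℝ => Real.arcsin ((x - 2) / 2)) (Icc 0 4) :=
    (Real.continuous_arcsin.comp (by continuity)).continuousOn
  rw [intervalIntegral.integral_eq_sub_of_hasDeriv_right_of_le (by norm_num) hcont hderiv
    mp_inv_sqrt_integrable]
  norm_num [Real.arcsin_one, Real.arcsin_neg_one]

/-- The function
`z ↦ φ(μ_MP, z) = ∫₀⁴ log|z-y| dμ_MP(y) - z/2` is strictly decreasing on `[4,∞)`,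
where `μ_MP` is the Marchenko–Pastur measure with density `√((4-y)y)/(2πy)` on `[0,4]`. -/
theorem mp_log_potential_strictAnti :
    StrictAntiOn
      (fun z : ℝ =>
        (∫ y in (0:ℝ)..4, Real.log |z - y| * (Real.sqrt ((4 - y) * y) / (2 * Real.pi * y)))
          - z / 2)
      (Set.Ici 4) := by
  intro a ha b hb hab
  simp only [Set.mem_Ici] at ha hb
  have hπ : 0 < Real.pi := Real.pi_pos
  have hIa := mp_intervalIntegrable ha
  have hIb := mp_intervalIntegrable hb
  simp only
  have hGval : ∫ y in (0:ℝ)..4, (b - a) / (2 * Real.pi) * (Real.sqrt ((4 - y) * y))⁻¹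
      = (b - a) / 2 := by
    rw [intervalIntegral.integral_const_mul, mp_inv_sqrt_integral]
    field_simp
  have hGint : IntegrableOn
      (fun y : ℝ => (b - a) / (2 * Real.pi) * (Real.sqrt ((4 - y) * y))⁻¹) (Ioc 0 4) := by
    have h := mp_inv_sqrt_integrable.const_mul ((b - a) / (2 * Real.pi))
    rwa [intervalIntegrable_iff_integrableOn_Ioc_of_le (by norm_num)] at h
  have hHint : IntegrableOn
      (fun y : ℝ => Real.log |b - y| * (Real.sqrt ((4 - y) * y) / (2 * Real.pi * y))
        - Real.log |a - y| * (Real.sqrt ((4 - y) * y) / (2 * Real.pi * y))) (Ioc 0 4) := by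
    have h := hIb.sub hIa
    rwa [intervalIntegrable_iff_integrableOn_Ioc_of_le (by norm_num)] at h
  have hpt : ∀ y ∈ Ioo (0:ℝ) 4,
      Real.log |b - y| * (Real.sqrt ((4 - y) * y) / (2 * Real.pi * y))
        - Real.log |a - y| * (Real.sqrt ((4 - y) * y) / (2 * Real.pi * y))
      < (b - a) / (2 * Real.pi) * (Real.sqrt ((4 - y) * y))⁻¹ := by
    intro y hy
    obtain ⟨hy0, hy4⟩ := hy
    have hay : 0 < a - y := by linarith
    have hby : 0 < b - y := by linarith
    have hq : (0:ℝ) < (4 - y) * y := by nlinarith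
    have hsq : 0 < Real.sqrt ((4 - y) * y) := Real.sqrt_pos.2 hq
    have hss : Real.sqrt ((4 - y) * y) * Real.sqrt ((4 - y) * y) = (4 - y) * y :=
      Real.mul_self_sqrt hq.le
    have hρ : 0 < Real.sqrt ((4 - y) * y) / (2 * Real.pi * y) := by positivity
    rw [abs_of_pos hby, abs_of_pos hay]
    have hlt : Real.log (b - y) - Real.log (a - y) < (b - a) / (4 - y) := by
      have ht0 : 0 < (b - y) / (a - y) := div_pos hby hay
      have ht1 : (b - y) / (a - y) ≠ 1 := by
        intro h
        rw [div_eq_one_iff_eq (ne_of_gt hay)] at h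
        linarith
      have h1 := Real.log_lt_sub_one_of_pos ht0 ht1
      rw [Real.log_div (ne_of_gt hby) (ne_of_gt hay)] at h1
      have h2 : (b - y) / (a - y) - 1 = (b - a) / (a - y) := by
        field_simp
        ring
      have h3 : (b - a) / (a - y) ≤ (b - a) / (4 - y) := by
        gcongr
      linarith
    have hEq : (b - a) / (4 - y) * (Real.sqrt ((4 - y) * y) / (2 * Real.pi * y))
        = (b - a) / (2 * Real.pi) * (Real.sqrt ((4 - y) * y))⁻¹ := by
      have hd1 : (0:ℝ) < (4 - y) * (2 * Real.pi * y) :=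
        mul_pos (by linarith) (mul_pos (mul_pos two_pos hπ) hy0)
      have hd2 : (0:ℝ) < 2 * Real.pi * Real.sqrt ((4 - y) * y) :=
        mul_pos (mul_pos two_pos hπ) hsq
      rw [← div_eq_mul_inv, div_div, div_mul_div_comm,
        div_eq_div_iff (ne_of_gt hd1) (ne_of_gt hd2)]
      linear_combination ((b - a) * 2 * Real.pi) * hss
    rw [← sub_mul, ← hEq]
    exact mul_lt_mul_of_pos_right hlt hρ
  have hnn : 0 ≤ᵐ[volume.restrict (Ioc (0:ℝ) 4)] fun y =>
      (b - a) / (2 * Real.pi) * (Real.sqrt ((4 - y) * y))⁻¹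
        - (Real.log |b - y| * (Real.sqrt ((4 - y) * y) / (2 * Real.pi * y))
          - Real.log |a - y| * (Real.sqrt ((4 - y) * y) / (2 * Real.pi * y))) := by
    filter_upwards [ae_restrict_mem measurableSet_Ioc] with y hy
    obtain ⟨hy0, hy4⟩ := hy
    simp only [Pi.zero_apply]
    rcases eq_or_lt_of_le hy4 with rfl | hy4'
    · norm_num [show ((4:ℝ) - 4) * 4 = 0 by norm_num, Real.sqrt_zero]
    · have := hpt y ⟨hy0, hy4'⟩
      linarith
  have hFint : IntegrableOn (fun y : ℝ =>
      (b - a) / (2 * Real.pi) * (Real.sqrt ((4 - y) * y))⁻¹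
        - (Real.log |b - y| * (Real.sqrt ((4 - y) * y) / (2 * Real.pi * y))
          - Real.log |a - y| * (Real.sqrt ((4 - y) * y) / (2 * Real.pi * y)))) (Ioc 0 4) :=
    hGint.sub hHint
  have hsupp : 0 < volume (Function.support (fun y : ℝ =>
      (b - a) / (2 * Real.pi) * (Real.sqrt ((4 - y) * y))⁻¹
        - (Real.log |b - y| * (Real.sqrt ((4 - y) * y) / (2 * Real.pi * y))
          - Real.log |a - y| * (Real.sqrt ((4 - y) * y) / (2 * Real.pi * y)))) ∩ Ioc 0 4) := by
    have hsub : Ioo (0:ℝ) 4 ⊆ Function.support (fun y : ℝ =>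
        (b - a) / (2 * Real.pi) * (Real.sqrt ((4 - y) * y))⁻¹
          - (Real.log |b - y| * (Real.sqrt ((4 - y) * y) / (2 * Real.pi * y))
            - Real.log |a - y| * (Real.sqrt ((4 - y) * y) / (2 * Real.pi * y)))) ∩ Ioc 0 4 := by
      intro y hy
      refine ⟨?_, Ioo_subset_Ioc_self hy⟩
      have h := hpt y hy
      simp only [Function.mem_support]
      intro h0
      have : (0:ℝ) <
          (b - a) / (2 * Real.pi) * (Real.sqrt ((4 - y) * y))⁻¹
            - (Real.log |b - y| * (Real.sqrt ((4 - y) * y) / (2 * Real.pi * y))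
              - Real.log |a - y| * (Real.sqrt ((4 - y) * y) / (2 * Real.pi * y))) := by
        linarith
      rw [h0] at this
      exact lt_irrefl 0 this
    calc (0:ENNReal) < volume (Ioo (0:ℝ) 4) := by rw [Real.volume_Ioo]; norm_num
      _ ≤ _ := measure_mono hsub
  have hpos : 0 < ∫ y in Ioc (0:ℝ) 4,
      ((b - a) / (2 * Real.pi) * (Real.sqrt ((4 - y) * y))⁻¹
        - (Real.log |b - y| * (Real.sqrt ((4 - y) * y) / (2 * Real.pi * y))
          - Real.log |a - y| * (Real.sqrt ((4 - y) * y) / (2 * Real.pi * y)))) :=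
    (MeasureTheory.setIntegral_pos_iff_support_of_nonneg_ae hnn hFint).2 hsupp
  have hsplit : (∫ y in Ioc (0:ℝ) 4,
      ((b - a) / (2 * Real.pi) * (Real.sqrt ((4 - y) * y))⁻¹
        - (Real.log |b - y| * (Real.sqrt ((4 - y) * y) / (2 * Real.pi * y))
          - Real.log |a - y| * (Real.sqrt ((4 - y) * y) / (2 * Real.pi * y)))))
      = (∫ y in Ioc (0:ℝ) 4, (b - a) / (2 * Real.pi) * (Real.sqrt ((4 - y) * y))⁻¹)
        - ∫ y in Ioc (0:ℝ) 4,
            (Real.log |b - y| * (Real.sqrt ((4 - y) * y) / (2 * Real.pi * y))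
              - Real.log |a - y| * (Real.sqrt ((4 - y) * y) / (2 * Real.pi * y))) :=
    MeasureTheory.integral_sub hGint hHint
  have hHeq : (∫ y in (0:ℝ)..4, Real.log |b - y| * (Real.sqrt ((4 - y) * y) / (2 * Real.pi * y)))
      - (∫ y in (0:ℝ)..4, Real.log |a - y| * (Real.sqrt ((4 - y) * y) / (2 * Real.pi * y)))
      = ∫ y in Ioc (0:ℝ) 4,
          (Real.log |b - y| * (Real.sqrt ((4 - y) * y) / (2 * Real.pi * y))
            - Real.log |a - y| * (Real.sqrt ((4 - y) * y) / (2 * Real.pi * y))) := by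
    rw [← intervalIntegral.integral_sub hIb hIa,
      intervalIntegral.integral_of_le (by norm_num : (0:ℝ) ≤ 4)]
  have hGeq : (∫ y in Ioc (0:ℝ) 4, (b - a) / (2 * Real.pi) * (Real.sqrt ((4 - y) * y))⁻¹)
      = (b - a) / 2 := by
    rw [← intervalIntegral.integral_of_le (by norm_num : (0:ℝ) ≤ 4)]
    exact hGval
  rw [hGeq] at hsplit
  linarith [hpos, hsplit, hHeq]
end
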